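/- arXiv:1211.4323 — 2 statements merged into one kernel-verified Lean document; each statement's English description precedes it below -/
import Mathlib

section
/- (Equidistribution under splitness.) Fix s ≥ 1, K > 0, and integers m_{j,c} (1 ≤ j ≤ s, 1 ≤ c ≤ 3), not all zero. For every ε' > 0 there is A₀ > 0 such that: for every A ≥ A₀, every matrix (a₁,b₁;a₂,b₂) ∈ G_η, every integers (k_j, l_j)_{j ≤ s} for which the points t^{(j)} = (⌊ln|a₁k_j + b₁l_j|⌋, ⌊ln|a₂k_j + b₂l_j|⌋) form an A-split family, every real numbers φ₁,…,φ_s, and every C¹ probability density ρ on ℝ⁴ supported in [−K,K]⁴ with ‖ρ‖_{C¹} ≤ K, one has | ∫_{ℝ⁴} ∏_{j=1}^s exp(2πi [ m_{j,1}(a₁k_j + b₁l_j)u + m_{j,2}(a₂k_j + b₂l_j)v + m_{j,3}(k_j x + l_j y + φ_j) ]) ρ(u,v,x,y) du dv dx dy | ≤ ε'. Consequently, the joint distribution of the 3s-tuple ( {(a₁k_j+b₁l_j)u}, {(a₂k_j+b₂l_j)v}, {k_j x + l_j y + φ_j} )_{j ≤ s} converges to the uniform distribution on 𝕋^{3s},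 uniformly over all such data. -/
open MeasureTheory Real

noncomputable section

/-- A finite family of points of `ℝ²` is `A`-split if all coordinates exceed `A`, and any
two members have first coordinates, second coordinates, and maxima of coordinates, all at
distance at least `A` from each other. -/
def IsSplit (A : ℝ) {s : ℕ} (t : Fin s → ℝ × ℝ) : Prop :=
  (∀ i, A < (t i).1 ∧ A < (t i).2) ∧
  ∀ i j, i ≠ j → A ≤ |(t i).1 - (t j).1| ∧ A ≤ |(t i).2 - (t j).2| ∧
    A ≤ |max (t i).1 (t i).2 - max (t j).1 (t j).2|



lemma myout {α : Type*} [MeasureSpace α] (h : α → ℂ) (t : Set α) (C : ℝ) (hC : 0 ≤ C)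
    (ht : volume t ≠ ⊤) (hz : ∀ x, x ∉ t → h x = 0) (hb : ∀ x, ‖h x‖ ≤ C) :
    ‖∫ x, h x‖ ≤ C * (volume t).toReal := by
  by_cases hi : Integrable h volume
  · rw [← setIntegral_eq_integral_of_forall_compl_eq_zero hz]
    exact norm_setIntegral_le_of_norm_le_const ht.lt_top (fun x _ => hb x)
  · rw [integral_undef hi, norm_zero]
    positivity

lemma swap_out {β : Type*} [MeasureSpace β] [SigmaFinite (volume : Measure β)]
    (F : ℝ × β → ℂ) (hF : Integrable F) (t : Set β) (C : ℝ) (hC : 0 ≤ C)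
    (ht : volume t ≠ ⊤)
    (hz : ∀ z, z ∉ t → ∀ u : ℝ, F (u, z) = 0)
    (hin : ∀ z, ‖∫ u : ℝ, F (u, z)‖ ≤ C) :
    ‖∫ w, F w‖ ≤ C * (volume t).toReal := by
  have hF' : Integrable F (volume.prod volume) := by
    rwa [← Measure.volume_eq_prod]
  have huncurry : Integrable (Function.uncurry fun u (z : β) => F (u, z)) (volume.prod volume) := by
    convert hF' using 1
    funext p; rfl
  rw [Measure.volume_eq_prod, integral_prod F hF']
  rw [integral_integral_swap huncurry]
  exact myout _ t C hC ht
    (fun z hzt => by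
      have : (fun u : ℝ => F (u, z)) = fun _ => 0 := funext fun u => hz z hzt u
      rw [this, integral_zero])
    hin



lemma byparts (K B M : ℝ) (hK : 0 < K) (hB : 0 ≤ B) (hM : M ≠ 0) (f f' : ℝ → ℂ)
    (hd : ∀ t, HasDerivAt f (f' t) t) (hc : Continuous f')
    (hs : ∀ t, K < |t| → f t = 0) (hb : ∀ t, ‖f' t‖ ≤ B) :
    ‖∫ t : ℝ, Complex.exp (2 * π * Complex.I * ((M * t : ℝ) : ℂ)) * f t‖
      ≤ (2 * K + 2) * B / (2 * π * |M|) := by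
  have hπ : (0:ℝ) < π := Real.pi_pos
  set c : ℂ := 2 * π * Complex.I * M with hc_def
  have hcne : c ≠ 0 := by
    simp only [hc_def]
    intro h
    rcases mul_eq_zero.1 h with h | h
    · rcases mul_eq_zero.1 h with h | h
      · rcases mul_eq_zero.1 h with h | h
        · norm_num at h
        · exact Real.pi_ne_zero (by exact_mod_cast h)
      · exact Complex.I_ne_zero h
    · exact hM (by exact_mod_cast h)
  have hcnorm : ‖c‖ = 2 * π * |M| := by
    simp only [hc_def, norm_mul, Complex.norm_I, Complex.norm_real, Complex.norm_ofNat,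
      Real.norm_eq_abs, abs_of_pos hπ]
    ring
  have hexp1 : ∀ t : ℝ, ‖Complex.exp (c * t)‖ = 1 := by
    intro t
    have : c * t = ((2 * π * M * t : ℝ) : ℂ) * Complex.I := by
      simp only [hc_def]; push_cast; ring
    rw [this, Complex.norm_exp_ofReal_mul_I]
  -- rewrite integrand
  have hrw : ∀ t : ℝ, Complex.exp (2 * π * Complex.I * ((M * t : ℝ) : ℂ)) * f t
      = f t * Complex.exp (c * t) := by
    intro t
    rw [mul_comm]
    congr 2
    simp only [hc_def]; push_cast; ring
  simp only [hrw]
  -- restrict to interval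
  have hsupp : Function.support (fun t : ℝ => f t * Complex.exp (c * t))
      ⊆ Set.Ioc (-(K+1)) (K+1) := by
    intro t ht
    simp only [Function.mem_support, ne_eq, mul_eq_zero, not_or] at ht
    by_contra hmem
    have : K < |t| := by
      simp only [Set.mem_Ioc, not_and_or, not_lt, not_le] at hmem
      rcases hmem with h | h
      · rw [abs_of_nonpos (by linarith)]; linarith
      · rw [abs_of_pos (by linarith)]; linarith
    exact ht.1 (hs t this)
  rw [← intervalIntegral.integral_eq_integral_of_support_subset hsupp]
  -- integration by parts
  set E : ℝ → ℂ := fun t => c⁻¹ * Complex.exp (c * t) with hE_def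
  have hE : ∀ t : ℝ, HasDerivAt E (Complex.exp (c * t)) t := by
    intro t
    have h1 : HasDerivAt (fun t : ℝ => (t : ℂ)) 1 t := by
      simpa using (hasDerivAt_id t).ofReal_comp
    have h2 : HasDerivAt (fun t : ℝ => c * (t : ℂ)) c t := by
      simpa using h1.const_mul c
    have h3 := h2.cexp
    have h4 := h3.const_mul c⁻¹
    exact h4.congr_deriv (by rw [mul_left_comm, inv_mul_cancel₀ hcne, mul_one])
  have hf0 : f (K+1) = 0 := hs _ (by rw [abs_of_pos (by linarith)]; linarith)
  have hf0' : f (-(K+1)) = 0 := hs _ (by rw [abs_of_nonpos (by linarith)]; linarith)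
  have hparts := intervalIntegral.integral_mul_deriv_eq_deriv_mul
    (a := -(K+1)) (b := K+1) (u := f) (v := E) (u' := f') (v' := fun t => Complex.exp (c * t))
    (fun x _ => hd x) (fun x _ => hE x) (hc.intervalIntegrable _ _)
    ((Complex.continuous_exp.comp (continuous_const.mul Complex.continuous_ofReal)).intervalIntegrable _ _)
  rw [hparts, hf0, hf0', zero_mul, zero_mul, sub_zero, zero_sub, norm_neg]
  have hbound : ∀ x ∈ Set.uIoc (-(K+1)) (K+1), ‖f' x * E x‖ ≤ B * (2 * π * |M|)⁻¹ := by
    intro x _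
    rw [norm_mul, hE_def]
    have : ‖c⁻¹ * Complex.exp (c * x)‖ = (2 * π * |M|)⁻¹ := by
      rw [norm_mul, hexp1, mul_one, norm_inv, hcnorm]
    rw [this]
    exact mul_le_mul_of_nonneg_right (hb x) (by positivity)
  have := intervalIntegral.norm_integral_le_of_norm_le_const hbound
  have habs : |(K+1) - (-(K+1))| = 2 * K + 2 := by rw [abs_of_pos (by linarith)]; ring
  rw [habs] at this
  calc ‖∫ x in (-(K+1))..(K+1), f' x * E x‖ ≤ B * (2 * π * |M|)⁻¹ * (2 * K + 2) := this
    _ = (2 * K + 2) * B / (2 * π * |M|) := by field_simp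

lemma exp_split (a b : ℝ) : Complex.exp (2 * π * Complex.I * ((a + b : ℝ) : ℂ))
    = Complex.exp (2 * π * Complex.I * ((a : ℝ) : ℂ)) *
      Complex.exp (2 * π * Complex.I * ((b : ℝ) : ℂ)) := by
  rw [← Complex.exp_add]; congr 1; push_cast; ring

lemma exp_unit (r : ℝ) : ‖Complex.exp (2 * π * Complex.I * ((r : ℝ) : ℂ))‖ = 1 := by
  rw [show 2 * π * Complex.I * ((r : ℝ) : ℂ) = ((2 * π * r : ℝ) : ℂ) * Complex.I by
    push_cast; ring, Complex.norm_exp_ofReal_mul_I]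

lemma key (K M₀ c₁ c₂ c₃ c₄ θ : ℝ) (hK : 0 < K) (hM₀ : 0 < M₀)
    (hcase : M₀ ≤ |c₁| ∨ M₀ ≤ |c₂| ∨ M₀ ≤ |c₃| ∨ M₀ ≤ |c₄|)
    (ρ : ℝ × ℝ × ℝ × ℝ → ℝ) (hρ : ContDiff ℝ 1 ρ) (hb : ∀ w, |ρ w| ≤ K)
    (hd : ∀ w, ‖fderiv ℝ ρ w‖ ≤ K)
    (hsupp : ∀ w, ρ w ≠ 0 → |w.1| ≤ K ∧ |w.2.1| ≤ K ∧ |w.2.2.1| ≤ K ∧ |w.2.2.2| ≤ K) :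
    ‖∫ w : ℝ × ℝ × ℝ × ℝ, Complex.exp (2 * π * Complex.I *
        ((c₁ * w.1 + c₂ * w.2.1 + c₃ * w.2.2.1 + c₄ * w.2.2.2 + θ : ℝ) : ℂ)) * (ρ w : ℂ)‖
      ≤ (2 * K + 2) * K / (2 * π * M₀) * (8 * K ^ 3) := by
  have hπ : (0 : ℝ) < π := Real.pi_pos
  set C₁ : ℝ := (2 * K + 2) * K / (2 * π * M₀) with hC₁_def
  have hC₁ : 0 ≤ C₁ := by positivity
  set F : ℝ × ℝ × ℝ × ℝ → ℂ := fun w => Complex.exp (2 * π * Complex.I *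
      ((c₁ * w.1 + c₂ * w.2.1 + c₃ * w.2.2.1 + c₄ * w.2.2.2 + θ : ℝ) : ℂ)) * (ρ w : ℂ)
    with hF_def
  have hρ0 : ∀ w : ℝ × ℝ × ℝ × ℝ,
      (K < |w.1| ∨ K < |w.2.1| ∨ K < |w.2.2.1| ∨ K < |w.2.2.2|) → ρ w = 0 := by
    intro w hw
    by_contra h
    rcases hsupp w h with ⟨h1, h2, h3, h4⟩
    rcases hw with h' | h' | h' | h' <;> linarith
  have hF0 : ∀ w : ℝ × ℝ × ℝ × ℝ,
      (K < |w.1| ∨ K < |w.2.1| ∨ K < |w.2.2.1| ∨ K < |w.2.2.2|) → F w = 0 := by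
    intro w hw; simp [hF_def, hρ0 w hw]
  have hmem : ∀ a : ℝ, a ∉ Set.Icc (-K) K ↔ K < |a| := by
    intro a; rw [Set.mem_Icc, ← abs_le]; exact not_le
  have hFc : Continuous F := by
    apply Continuous.mul
    · exact Complex.continuous_exp.comp (Continuous.mul continuous_const
        (Complex.continuous_ofReal.comp (by fun_prop)))
    · exact Complex.continuous_ofReal.comp hρ.continuous
  have hIccR : (volume (Set.Icc (-K) K)).toReal = 2 * K := by
    rw [Real.volume_Icc, ENNReal.toReal_ofReal (by linarith)]; ring
  have hIccF : volume (Set.Icc (-K) K) ≠ ⊤ := by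
    rw [Real.volume_Icc]; exact ENNReal.ofReal_ne_top
  set box2 : Set (ℝ × ℝ) := Set.Icc (-K) K ×ˢ Set.Icc (-K) K with hbox2_def
  set box3 : Set (ℝ × ℝ × ℝ) := Set.Icc (-K) K ×ˢ box2 with hbox3_def
  have hvol2 : volume box2 ≠ ⊤ ∧ (volume box2).toReal = 2 * K * (2 * K) := by
    constructor
    · rw [hbox2_def, Measure.volume_eq_prod, Measure.prod_prod, Real.volume_Icc]
      exact ENNReal.mul_ne_top ENNReal.ofReal_ne_top ENNReal.ofReal_ne_top
    · rw [hbox2_def, Measure.volume_eq_prod, Measure.prod_prod, Real.volume_Icc,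
        ENNReal.toReal_mul, ENNReal.toReal_ofReal (by linarith)]
      ring
  have hvol3 : volume box3 ≠ ⊤ ∧ (volume box3).toReal = 2 * K * (2 * K * (2 * K)) := by
    constructor
    · rw [hbox3_def, Measure.volume_eq_prod, Measure.prod_prod, Real.volume_Icc]
      exact ENNReal.mul_ne_top ENNReal.ofReal_ne_top hvol2.1
    · rw [hbox3_def, Measure.volume_eq_prod, Measure.prod_prod, Real.volume_Icc,
        ENNReal.toReal_mul, ENNReal.toReal_ofReal (by linarith), hvol2.2]
      ring
  -- non-membership in boxes
  have hnm2 : ∀ p : ℝ × ℝ, p ∉ box2 → K < |p.1| ∨ K < |p.2| := by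
    intro p hp
    rw [hbox2_def, Set.mem_prod, not_and_or] at hp
    rcases hp with h | h
    · exact Or.inl ((hmem _).1 h)
    · exact Or.inr ((hmem _).1 h)
  have hnm3 : ∀ z : ℝ × ℝ × ℝ, z ∉ box3 → K < |z.1| ∨ K < |z.2.1| ∨ K < |z.2.2| := by
    intro z hz
    rw [hbox3_def, Set.mem_prod, not_and_or] at hz
    rcases hz with h | h
    · exact Or.inl ((hmem _).1 h)
    · rcases hnm2 _ h with h' | h'
      · exact Or.inr (Or.inl h')
      · exact Or.inr (Or.inr h')
  -- integrability
  have hInt4 : Integrable F := by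
    apply hFc.integrable_of_hasCompactSupport
    apply HasCompactSupport.intro (K := Set.Icc (-K) K ×ˢ box3)
    · exact isCompact_Icc.prod (by
        rw [hbox3_def, hbox2_def]
        exact isCompact_Icc.prod (isCompact_Icc.prod isCompact_Icc))
    · intro w hw
      rw [Set.mem_prod, not_and_or] at hw
      rcases hw with h | h
      · exact hF0 w (Or.inl ((hmem _).1 h))
      · rcases hnm3 _ h with h' | h' | h'
        · exact hF0 w (Or.inr (Or.inl h'))
        · exact hF0 w (Or.inr (Or.inr (Or.inl h')))
        · exact hF0 w (Or.inr (Or.inr (Or.inr h')))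
  have hInt3 : ∀ u : ℝ, Integrable (fun z : ℝ × ℝ × ℝ => F (u, z)) := by
    intro u
    apply (hFc.comp (Continuous.prodMk_right u)).integrable_of_hasCompactSupport
    apply HasCompactSupport.intro (K := box3)
    · rw [hbox3_def, hbox2_def]
      exact isCompact_Icc.prod (isCompact_Icc.prod isCompact_Icc)
    · intro z hz
      rcases hnm3 _ hz with h | h | h
      · exact hF0 (u, z) (Or.inr (Or.inl h))
      · exact hF0 (u, z) (Or.inr (Or.inr (Or.inl h)))
      · exact hF0 (u, z) (Or.inr (Or.inr (Or.inr h)))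
  have hInt2 : ∀ u v : ℝ, Integrable (fun p : ℝ × ℝ => F (u, v, p)) := by
    intro u v
    apply (hFc.comp ((continuous_const.prodMk
      (continuous_const.prodMk continuous_id : Continuous fun p : ℝ × ℝ => ((v, p) : ℝ × ℝ × ℝ))
      : Continuous fun p : ℝ × ℝ => ((u, v, p) : ℝ × ℝ × ℝ × ℝ)))).integrable_of_hasCompactSupport
    apply HasCompactSupport.intro (K := box2)
    · rw [hbox2_def]; exact isCompact_Icc.prod isCompact_Icc
    · intro p hp
      rcases hnm2 _ hp with h | h
      · exact hF0 (u, v, p) (Or.inr (Or.inr (Or.inl h)))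
      · exact hF0 (u, v, p) (Or.inr (Or.inr (Or.inr h)))
  -- derivative helpers
  have hDcont : ∀ e : ℝ × ℝ × ℝ × ℝ, Continuous (fun w => fderiv ℝ ρ w e) :=
    fun e => (hρ.continuous_fderiv one_ne_zero).clm_apply continuous_const
  have hDbound : ∀ e : ℝ × ℝ × ℝ × ℝ, ‖e‖ ≤ 1 → ∀ w, |fderiv ℝ ρ w e| ≤ K := by
    intro e he w
    rw [← Real.norm_eq_abs]
    calc ‖fderiv ℝ ρ w e‖ ≤ ‖fderiv ℝ ρ w‖ * ‖e‖ := (fderiv ℝ ρ w).le_opNorm e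
      _ ≤ K * 1 := mul_le_mul (hd w) he (norm_nonneg e) (le_trans (abs_nonneg _) (hb w))
      _ = K := mul_one K
  have he1 : ‖((1 : ℝ), (0 : ℝ), (0 : ℝ), (0 : ℝ))‖ ≤ 1 := by
    simp [Prod.norm_def, norm_zero, norm_one]
  have he2 : ‖((0 : ℝ), (1 : ℝ), (0 : ℝ), (0 : ℝ))‖ ≤ 1 := by
    simp [Prod.norm_def, norm_zero, norm_one]
  have he3 : ‖((0 : ℝ), (0 : ℝ), (1 : ℝ), (0 : ℝ))‖ ≤ 1 := by
    simp [Prod.norm_def, norm_zero, norm_one]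
  have he4 : ‖((0 : ℝ), (0 : ℝ), (0 : ℝ), (1 : ℝ))‖ ≤ 1 := by
    simp [Prod.norm_def, norm_zero, norm_one]
  
  -- inner integration-by-parts bounds
  have hinner_u : M₀ ≤ |c₁| → ∀ z : ℝ × ℝ × ℝ, ‖∫ u : ℝ, F (u, z)‖ ≤ C₁ := by
    intro hc z
    have hcne : c₁ ≠ 0 := by intro h; rw [h, abs_zero] at hc; linarith
    set E : ℂ := Complex.exp (2 * π * Complex.I *
      ((c₂ * z.1 + c₃ * z.2.1 + c₄ * z.2.2 + θ : ℝ) : ℂ)) with hE_def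
    have hEnorm : ‖E‖ = 1 := exp_unit _
    set g : ℝ → ℂ := fun u => E * (ρ (u, z) : ℂ) with hg_def
    set g' : ℝ → ℂ := fun u => E * ((fderiv ℝ ρ (u, z) (1, 0, 0, 0) : ℝ) : ℂ) with hg'_def
    have hrw : ∀ u : ℝ, F (u, z) = Complex.exp (2 * π * Complex.I * ((c₁ * u : ℝ) : ℂ)) * g u := by
      intro u
      show Complex.exp (2 * π * Complex.I *
        ((c₁ * u + c₂ * z.1 + c₃ * z.2.1 + c₄ * z.2.2 + θ : ℝ) : ℂ)) * (ρ (u, z) : ℂ) = _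
      rw [show (c₁ * u + c₂ * z.1 + c₃ * z.2.1 + c₄ * z.2.2 + θ : ℝ)
        = c₁ * u + (c₂ * z.1 + c₃ * z.2.1 + c₄ * z.2.2 + θ) from by ring, exp_split,
        hg_def, hE_def, mul_assoc]
    have hder : ∀ u : ℝ, HasDerivAt g (g' u) u := by
      intro u
      have hγ : HasDerivAt (fun u : ℝ => ((u, z) : ℝ × ℝ × ℝ × ℝ))
          ((1, 0, 0, 0) : ℝ × ℝ × ℝ × ℝ) u := (hasDerivAt_id u).prodMk (hasDerivAt_const u z)
      have h1 := ((hρ.differentiable one_ne_zero) (u, z)).hasFDerivAt.comp_hasDerivAt u hγ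
      have h2 := Complex.ofRealCLM.hasFDerivAt.comp_hasDerivAt u h1
      have h3 := h2.const_mul E
      simpa [hg_def, hg'_def, Complex.ofRealCLM_apply] using h3
    have hcontg' : Continuous g' := by
      apply continuous_const.mul
      exact Complex.continuous_ofReal.comp ((hDcont _).comp
        (continuous_id.prodMk continuous_const))
    have hsupg : ∀ u : ℝ, K < |u| → g u = 0 := by
      intro u hu; simp [hg_def, hρ0 (u, z) (Or.inl hu)]
    have hbg' : ∀ u : ℝ, ‖g' u‖ ≤ K := by
      intro u
      rw [hg'_def]
      calc ‖E * ((fderiv ℝ ρ (u, z) (1, 0, 0, 0) : ℝ) : ℂ)‖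
          = |fderiv ℝ ρ (u, z) (1, 0, 0, 0)| := by
            rw [norm_mul, hEnorm, one_mul, Complex.norm_real, Real.norm_eq_abs]
        _ ≤ K := hDbound _ he1 _
    calc ‖∫ u : ℝ, F (u, z)‖
        = ‖∫ u : ℝ, Complex.exp (2 * π * Complex.I * ((c₁ * u : ℝ) : ℂ)) * g u‖ := by
          simp only [hrw]
      _ ≤ (2 * K + 2) * K / (2 * π * |c₁|) :=
          byparts K K c₁ hK hK.le hcne g g' hder hcontg' hsupg hbg'
      _ ≤ C₁ := by rw [hC₁_def]; gcongr
  have hinner_v : M₀ ≤ |c₂| → ∀ (u : ℝ) (p : ℝ × ℝ), ‖∫ v : ℝ, F (u, v, p)‖ ≤ C₁ := by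
    intro hc u p
    have hcne : c₂ ≠ 0 := by intro h; rw [h, abs_zero] at hc; linarith
    set E : ℂ := Complex.exp (2 * π * Complex.I *
      ((c₁ * u + c₃ * p.1 + c₄ * p.2 + θ : ℝ) : ℂ)) with hE_def
    have hEnorm : ‖E‖ = 1 := exp_unit _
    set g : ℝ → ℂ := fun v => E * (ρ (u, v, p) : ℂ) with hg_def
    set g' : ℝ → ℂ := fun v => E * ((fderiv ℝ ρ (u, v, p) (0, 1, 0, 0) : ℝ) : ℂ) with hg'_def
    have hrw : ∀ v : ℝ, F (u, v, p) = Complex.exp (2 * π * Complex.I * ((c₂ * v : ℝ) : ℂ)) * g v := by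
      intro v
      show Complex.exp (2 * π * Complex.I *
        ((c₁ * u + c₂ * v + c₃ * p.1 + c₄ * p.2 + θ : ℝ) : ℂ)) * (ρ (u, v, p) : ℂ) = _
      rw [show (c₁ * u + c₂ * v + c₃ * p.1 + c₄ * p.2 + θ : ℝ)
        = c₂ * v + (c₁ * u + c₃ * p.1 + c₄ * p.2 + θ) from by ring, exp_split,
        hg_def, hE_def, mul_assoc]
    have hder : ∀ v : ℝ, HasDerivAt g (g' v) v := by
      intro v
      have hγ : HasDerivAt (fun v : ℝ => ((u, v, p) : ℝ × ℝ × ℝ × ℝ))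
          ((0, 1, 0, 0) : ℝ × ℝ × ℝ × ℝ) v :=
        (hasDerivAt_const v u).prodMk ((hasDerivAt_id v).prodMk (hasDerivAt_const v p))
      have h1 := ((hρ.differentiable one_ne_zero) (u, v, p)).hasFDerivAt.comp_hasDerivAt v hγ
      have h2 := Complex.ofRealCLM.hasFDerivAt.comp_hasDerivAt v h1
      have h3 := h2.const_mul E
      simpa [hg_def, hg'_def, Complex.ofRealCLM_apply] using h3
    have hcontg' : Continuous g' := by
      apply continuous_const.mul
      exact Complex.continuous_ofReal.comp ((hDcont _).comp
        (continuous_const.prodMk (continuous_id.prodMk continuous_const)))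
    have hsupg : ∀ v : ℝ, K < |v| → g v = 0 := by
      intro v hv; simp [hg_def, hρ0 (u, v, p) (Or.inr (Or.inl hv))]
    have hbg' : ∀ v : ℝ, ‖g' v‖ ≤ K := by
      intro v
      rw [hg'_def]
      calc ‖E * ((fderiv ℝ ρ (u, v, p) (0, 1, 0, 0) : ℝ) : ℂ)‖
          = |fderiv ℝ ρ (u, v, p) (0, 1, 0, 0)| := by
            rw [norm_mul, hEnorm, one_mul, Complex.norm_real, Real.norm_eq_abs]
        _ ≤ K := hDbound _ he2 _
    calc ‖∫ v : ℝ, F (u, v, p)‖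
        = ‖∫ v : ℝ, Complex.exp (2 * π * Complex.I * ((c₂ * v : ℝ) : ℂ)) * g v‖ := by
          simp only [hrw]
      _ ≤ (2 * K + 2) * K / (2 * π * |c₂|) :=
          byparts K K c₂ hK hK.le hcne g g' hder hcontg' hsupg hbg'
      _ ≤ C₁ := by rw [hC₁_def]; gcongr
  have hinner_x : M₀ ≤ |c₃| → ∀ (u v y : ℝ), ‖∫ x : ℝ, F (u, v, x, y)‖ ≤ C₁ := by
    intro hc u v y
    have hcne : c₃ ≠ 0 := by intro h; rw [h, abs_zero] at hc; linarith
    set E : ℂ := Complex.exp (2 * π * Complex.I *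
      ((c₁ * u + c₂ * v + c₄ * y + θ : ℝ) : ℂ)) with hE_def
    have hEnorm : ‖E‖ = 1 := exp_unit _
    set g : ℝ → ℂ := fun x => E * (ρ (u, v, x, y) : ℂ) with hg_def
    set g' : ℝ → ℂ := fun x => E * ((fderiv ℝ ρ (u, v, x, y) (0, 0, 1, 0) : ℝ) : ℂ) with hg'_def
    have hrw : ∀ x : ℝ, F (u, v, x, y) = Complex.exp (2 * π * Complex.I * ((c₃ * x : ℝ) : ℂ)) * g x := by
      intro x
      show Complex.exp (2 * π * Complex.I *
        ((c₁ * u + c₂ * v + c₃ * x + c₄ * y + θ : ℝ) : ℂ)) * (ρ (u, v, x, y) : ℂ) = _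
      rw [show (c₁ * u + c₂ * v + c₃ * x + c₄ * y + θ : ℝ)
        = c₃ * x + (c₁ * u + c₂ * v + c₄ * y + θ) from by ring, exp_split,
        hg_def, hE_def, mul_assoc]
    have hder : ∀ x : ℝ, HasDerivAt g (g' x) x := by
      intro x
      have hγ : HasDerivAt (fun x : ℝ => ((u, v, x, y) : ℝ × ℝ × ℝ × ℝ))
          ((0, 0, 1, 0) : ℝ × ℝ × ℝ × ℝ) x :=
        (hasDerivAt_const x u).prodMk ((hasDerivAt_const x v).prodMk
          ((hasDerivAt_id x).prodMk (hasDerivAt_const x y)))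
      have h1 := ((hρ.differentiable one_ne_zero) (u, v, x, y)).hasFDerivAt.comp_hasDerivAt x hγ
      have h2 := Complex.ofRealCLM.hasFDerivAt.comp_hasDerivAt x h1
      have h3 := h2.const_mul E
      simpa [hg_def, hg'_def, Complex.ofRealCLM_apply] using h3
    have hcontg' : Continuous g' := by
      apply continuous_const.mul
      exact Complex.continuous_ofReal.comp ((hDcont _).comp
        (continuous_const.prodMk (continuous_const.prodMk
          (continuous_id.prodMk continuous_const))))
    have hsupg : ∀ x : ℝ, K < |x| → g x = 0 := by
      intro x hx; simp [hg_def, hρ0 (u, v, x, y) (Or.inr (Or.inr (Or.inl hx)))]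
    have hbg' : ∀ x : ℝ, ‖g' x‖ ≤ K := by
      intro x
      rw [hg'_def]
      calc ‖E * ((fderiv ℝ ρ (u, v, x, y) (0, 0, 1, 0) : ℝ) : ℂ)‖
          = |fderiv ℝ ρ (u, v, x, y) (0, 0, 1, 0)| := by
            rw [norm_mul, hEnorm, one_mul, Complex.norm_real, Real.norm_eq_abs]
        _ ≤ K := hDbound _ he3 _
    calc ‖∫ x : ℝ, F (u, v, x, y)‖
        = ‖∫ x : ℝ, Complex.exp (2 * π * Complex.I * ((c₃ * x : ℝ) : ℂ)) * g x‖ := by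
          simp only [hrw]
      _ ≤ (2 * K + 2) * K / (2 * π * |c₃|) :=
          byparts K K c₃ hK hK.le hcne g g' hder hcontg' hsupg hbg'
      _ ≤ C₁ := by rw [hC₁_def]; gcongr
  have hinner_y : M₀ ≤ |c₄| → ∀ (u v x : ℝ), ‖∫ y : ℝ, F (u, v, x, y)‖ ≤ C₁ := by
    intro hc u v x
    have hcne : c₄ ≠ 0 := by intro h; rw [h, abs_zero] at hc; linarith
    set E : ℂ := Complex.exp (2 * π * Complex.I *
      ((c₁ * u + c₂ * v + c₃ * x + θ : ℝ) : ℂ)) with hE_def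
    have hEnorm : ‖E‖ = 1 := exp_unit _
    set g : ℝ → ℂ := fun y => E * (ρ (u, v, x, y) : ℂ) with hg_def
    set g' : ℝ → ℂ := fun y => E * ((fderiv ℝ ρ (u, v, x, y) (0, 0, 0, 1) : ℝ) : ℂ) with hg'_def
    have hrw : ∀ y : ℝ, F (u, v, x, y) = Complex.exp (2 * π * Complex.I * ((c₄ * y : ℝ) : ℂ)) * g y := by
      intro y
      show Complex.exp (2 * π * Complex.I *
        ((c₁ * u + c₂ * v + c₃ * x + c₄ * y + θ : ℝ) : ℂ)) * (ρ (u, v, x, y) : ℂ) = _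
      rw [show (c₁ * u + c₂ * v + c₃ * x + c₄ * y + θ : ℝ)
        = c₄ * y + (c₁ * u + c₂ * v + c₃ * x + θ) from by ring, exp_split,
        hg_def, hE_def, mul_assoc]
    have hder : ∀ y : ℝ, HasDerivAt g (g' y) y := by
      intro y
      have hγ : HasDerivAt (fun y : ℝ => ((u, v, x, y) : ℝ × ℝ × ℝ × ℝ))
          ((0, 0, 0, 1) : ℝ × ℝ × ℝ × ℝ) y :=
        (hasDerivAt_const y u).prodMk ((hasDerivAt_const y v).prodMk
          ((hasDerivAt_const y x).prodMk (hasDerivAt_id y)))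
      have h1 := ((hρ.differentiable one_ne_zero) (u, v, x, y)).hasFDerivAt.comp_hasDerivAt y hγ
      have h2 := Complex.ofRealCLM.hasFDerivAt.comp_hasDerivAt y h1
      have h3 := h2.const_mul E
      simpa [hg_def, hg'_def, Complex.ofRealCLM_apply] using h3
    have hcontg' : Continuous g' := by
      apply continuous_const.mul
      exact Complex.continuous_ofReal.comp ((hDcont _).comp
        (continuous_const.prodMk (continuous_const.prodMk
          (continuous_const.prodMk continuous_id))))
    have hsupg : ∀ y : ℝ, K < |y| → g y = 0 := by
      intro y hy; simp [hg_def, hρ0 (u, v, x, y) (Or.inr (Or.inr (Or.inr hy)))]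
    have hbg' : ∀ y : ℝ, ‖g' y‖ ≤ K := by
      intro y
      rw [hg'_def]
      calc ‖E * ((fderiv ℝ ρ (u, v, x, y) (0, 0, 0, 1) : ℝ) : ℂ)‖
          = |fderiv ℝ ρ (u, v, x, y) (0, 0, 0, 1)| := by
            rw [norm_mul, hEnorm, one_mul, Complex.norm_real, Real.norm_eq_abs]
        _ ≤ K := hDbound _ he4 _
    calc ‖∫ y : ℝ, F (u, v, x, y)‖
        = ‖∫ y : ℝ, Complex.exp (2 * π * Complex.I * ((c₄ * y : ℝ) : ℂ)) * g y‖ := by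
          simp only [hrw]
      _ ≤ (2 * K + 2) * K / (2 * π * |c₄|) :=
          byparts K K c₄ hK hK.le hcne g g' hder hcontg' hsupg hbg'
      _ ≤ C₁ := by rw [hC₁_def]; gcongr
  -- assembly
  rcases hcase with hc | hc | hc | hc
  · -- c₁ case
    calc ‖∫ w : ℝ × ℝ × ℝ × ℝ, F w‖ ≤ C₁ * (volume box3).toReal :=
        swap_out F hInt4 box3 C₁ hC₁ hvol3.1
          (fun z hz u => hF0 (u, z) (by
            rcases hnm3 z hz with h | h | h
            exacts [Or.inr (Or.inl h), Or.inr (Or.inr (Or.inl h)),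
              Or.inr (Or.inr (Or.inr h))]))
          (hinner_u hc)
      _ = C₁ * (8 * K ^ 3) := by rw [hvol3.2]; ring
  · -- c₂ case
    have hslice : ∀ u : ℝ, ‖∫ z : ℝ × ℝ × ℝ, F (u, z)‖ ≤ C₁ * (2 * K * (2 * K)) := by
      intro u
      calc ‖∫ z : ℝ × ℝ × ℝ, F (u, z)‖ ≤ C₁ * (volume box2).toReal :=
          swap_out (β := ℝ × ℝ) (fun z => F (u, z)) (hInt3 u) box2 C₁ hC₁ hvol2.1
            (fun p hp v => hF0 (u, v, p) (by
              rcases hnm2 p hp with h | h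
              exacts [Or.inr (Or.inr (Or.inl h)), Or.inr (Or.inr (Or.inr h))]))
            (fun p => hinner_v hc u p)
        _ = C₁ * (2 * K * (2 * K)) := by rw [hvol2.2]
    rw [show (∫ w : ℝ × ℝ × ℝ × ℝ, F w) = ∫ u : ℝ, ∫ z : ℝ × ℝ × ℝ, F (u, z) from
      integral_prod F hInt4]
    calc ‖∫ u : ℝ, ∫ z : ℝ × ℝ × ℝ, F (u, z)‖
        ≤ (C₁ * (2 * K * (2 * K))) * (volume (Set.Icc (-K) K)).toReal :=
        myout _ (Set.Icc (-K) K) _ (by positivity) hIccF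
          (fun u hu => by
            have h0 : (fun z : ℝ × ℝ × ℝ => F (u, z)) = fun _ => 0 :=
              funext fun z => hF0 (u, z) (Or.inl ((hmem u).1 hu))
            rw [h0, integral_zero])
          hslice
      _ = C₁ * (8 * K ^ 3) := by rw [hIccR]; ring
  · -- c₃ case
    have hslice2 : ∀ u v : ℝ, ‖∫ p : ℝ × ℝ, F (u, v, p)‖ ≤ C₁ * (2 * K) := by
      intro u v
      calc ‖∫ p : ℝ × ℝ, F (u, v, p)‖ ≤ C₁ * (volume (Set.Icc (-K) K)).toReal :=
          swap_out (β := ℝ) (fun p => F (u, v, p)) (hInt2 u v) (Set.Icc (-K) K) C₁ hC₁ hIccF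
            (fun y hy x => hF0 (u, v, x, y) (Or.inr (Or.inr (Or.inr ((hmem y).1 hy)))))
            (fun y => hinner_x hc u v y)
        _ = C₁ * (2 * K) := by rw [hIccR]
    have hslice3 : ∀ u : ℝ, ‖∫ z : ℝ × ℝ × ℝ, F (u, z)‖ ≤ C₁ * (2 * K) * (2 * K) := by
      intro u
      rw [show (∫ z : ℝ × ℝ × ℝ, F (u, z)) = ∫ v : ℝ, ∫ p : ℝ × ℝ, F (u, v, p) from
        integral_prod _ (hInt3 u)]
      calc ‖∫ v : ℝ, ∫ p : ℝ × ℝ, F (u, v, p)‖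
          ≤ (C₁ * (2 * K)) * (volume (Set.Icc (-K) K)).toReal :=
          myout _ (Set.Icc (-K) K) _ (by positivity) hIccF
            (fun v hv => by
              have h0 : (fun p : ℝ × ℝ => F (u, v, p)) = fun _ => 0 :=
                funext fun p => hF0 (u, v, p) (Or.inr (Or.inl ((hmem v).1 hv)))
              rw [h0, integral_zero])
            (hslice2 u)
        _ = C₁ * (2 * K) * (2 * K) := by rw [hIccR]
    rw [show (∫ w : ℝ × ℝ × ℝ × ℝ, F w) = ∫ u : ℝ, ∫ z : ℝ × ℝ × ℝ, F (u, z) from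
      integral_prod F hInt4]
    calc ‖∫ u : ℝ, ∫ z : ℝ × ℝ × ℝ, F (u, z)‖
        ≤ (C₁ * (2 * K) * (2 * K)) * (volume (Set.Icc (-K) K)).toReal :=
        myout _ (Set.Icc (-K) K) _ (by positivity) hIccF
          (fun u hu => by
            have h0 : (fun z : ℝ × ℝ × ℝ => F (u, z)) = fun _ => 0 :=
              funext fun z => hF0 (u, z) (Or.inl ((hmem u).1 hu))
            rw [h0, integral_zero])
          hslice3
      _ = C₁ * (8 * K ^ 3) := by rw [hIccR]; ring
  · -- c₄ case
    have hslice2 : ∀ u v : ℝ, ‖∫ p : ℝ × ℝ, F (u, v, p)‖ ≤ C₁ * (2 * K) := by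
      intro u v
      rw [show (∫ p : ℝ × ℝ, F (u, v, p)) = ∫ x : ℝ, ∫ y : ℝ, F (u, v, x, y) from
        integral_prod _ (hInt2 u v)]
      calc ‖∫ x : ℝ, ∫ y : ℝ, F (u, v, x, y)‖
          ≤ C₁ * (volume (Set.Icc (-K) K)).toReal :=
          myout _ (Set.Icc (-K) K) _ hC₁ hIccF
            (fun x hx => by
              have h0 : (fun y : ℝ => F (u, v, x, y)) = fun _ => 0 :=
                funext fun y => hF0 (u, v, x, y) (Or.inr (Or.inr (Or.inl ((hmem x).1 hx))))
              rw [h0, integral_zero])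
            (fun x => hinner_y hc u v x)
        _ = C₁ * (2 * K) := by rw [hIccR]
    have hslice3 : ∀ u : ℝ, ‖∫ z : ℝ × ℝ × ℝ, F (u, z)‖ ≤ C₁ * (2 * K) * (2 * K) := by
      intro u
      rw [show (∫ z : ℝ × ℝ × ℝ, F (u, z)) = ∫ v : ℝ, ∫ p : ℝ × ℝ, F (u, v, p) from
        integral_prod _ (hInt3 u)]
      calc ‖∫ v : ℝ, ∫ p : ℝ × ℝ, F (u, v, p)‖
          ≤ (C₁ * (2 * K)) * (volume (Set.Icc (-K) K)).toReal :=
          myout _ (Set.Icc (-K) K) _ (by positivity) hIccF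
            (fun v hv => by
              have h0 : (fun p : ℝ × ℝ => F (u, v, p)) = fun _ => 0 :=
                funext fun p => hF0 (u, v, p) (Or.inr (Or.inl ((hmem v).1 hv)))
              rw [h0, integral_zero])
            (hslice2 u)
        _ = C₁ * (2 * K) * (2 * K) := by rw [hIccR]
    rw [show (∫ w : ℝ × ℝ × ℝ × ℝ, F w) = ∫ u : ℝ, ∫ z : ℝ × ℝ × ℝ, F (u, z) from
      integral_prod F hInt4]
    calc ‖∫ u : ℝ, ∫ z : ℝ × ℝ × ℝ, F (u, z)‖
        ≤ (C₁ * (2 * K) * (2 * K)) * (volume (Set.Icc (-K) K)).toReal :=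
        myout _ (Set.Icc (-K) K) _ (by positivity) hIccF
          (fun u hu => by
            have h0 : (fun z : ℝ × ℝ × ℝ => F (u, z)) = fun _ => 0 :=
              funext fun z => hF0 (u, z) (Or.inl ((hmem u).1 hu))
            rw [h0, integral_zero])
          hslice3
      _ = C₁ * (8 * K ^ 3) := by rw [hIccR]; ring

lemma ratio_sep (Ti Tj A Q : ℝ) (hTi : 0 < Ti) (hTj : 0 < Tj) (hQ : 2 * Q ≤ Real.exp (A - 1))
    (hfl : A ≤ |((⌊Real.log Ti⌋ : ℤ) : ℝ) - ((⌊Real.log Tj⌋ : ℤ) : ℝ)|) (hle : Ti ≤ Tj) :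
    Ti * (2 * Q) ≤ Tj := by
  have h1 : Real.log Ti ≤ Real.log Tj := Real.log_le_log hTi hle
  have h2 : ((⌊Real.log Ti⌋ : ℤ) : ℝ) ≤ ((⌊Real.log Tj⌋ : ℤ) : ℝ) := by
    exact_mod_cast Int.floor_le_floor h1
  rw [abs_sub_comm, abs_of_nonneg (by linarith)] at hfl
  have h3 : ((⌊Real.log Tj⌋ : ℤ) : ℝ) ≤ Real.log Tj := Int.floor_le _
  have h4 : Real.log Ti - 1 ≤ ((⌊Real.log Ti⌋ : ℤ) : ℝ) := by
    have := Int.sub_one_lt_floor (Real.log Ti); linarith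
  have h5 : A - 1 ≤ Real.log Tj - Real.log Ti := by linarith
  have h6 : Real.exp (A - 1) ≤ Tj / Ti := by
    have heq : Tj / Ti = Real.exp (Real.log Tj - Real.log Ti) := by
      rw [Real.exp_sub, Real.exp_log hTj, Real.exp_log hTi]
    rw [heq]; exact Real.exp_le_exp.2 h5
  calc Ti * (2 * Q) ≤ Ti * Real.exp (A - 1) := mul_le_mul_of_nonneg_left hQ hTi.le
    _ ≤ Ti * (Tj / Ti) := mul_le_mul_of_nonneg_left h6 hTi.le
    _ = Tj := by field_simp

lemma floor_log_max (a b : ℝ) (ha : 0 < a) (hb : 0 < b) :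
    (⌊Real.log (max a b)⌋ : ℤ) = max ⌊Real.log a⌋ ⌊Real.log b⌋ := by
  rcases le_total a b with h | h
  · rw [max_eq_right h, max_eq_right (Int.floor_le_floor (Real.log_le_log ha h))]
  · rw [max_eq_left h, max_eq_left (Int.floor_le_floor (Real.log_le_log hb h))]

lemma dominant {s : ℕ} (w : Fin s → ℤ) (T : Fin s → ℝ) (E Q : ℝ) (hE : 0 < E) (hQ1 : 1 ≤ Q)
    (hS : ∃ j, w j ≠ 0)
    (hT : ∀ j, w j ≠ 0 → E < T j)
    (hw : (∑ j, (|w j| : ℝ)) ≤ Q)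
    (hsep : ∀ i j, w i ≠ 0 → w j ≠ 0 → i ≠ j → T i ≤ T j → T i * (2 * Q) ≤ T j) :
    ∃ j₀, w j₀ ≠ 0 ∧ E < T j₀ ∧ (∀ j, w j ≠ 0 → T j ≤ T j₀) ∧
      ∀ N : Fin s → ℝ, (∀ j, |N j| ≤ T j) → |N j₀| = T j₀ →
        T j₀ / 2 ≤ |∑ j, (w j : ℝ) * N j| := by
  classical
  set S : Finset (Fin s) := Finset.univ.filter (fun j => w j ≠ 0) with hS_def
  have hSne : S.Nonempty := by
    obtain ⟨j, hj⟩ := hS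
    exact ⟨j, by simp [hS_def, hj]⟩
  obtain ⟨j₀, hj₀S, hj₀max⟩ := S.exists_max_image T hSne
  have hj₀w : w j₀ ≠ 0 := by simpa [hS_def] using hj₀S
  have hmax : ∀ j, w j ≠ 0 → T j ≤ T j₀ := by
    intro j hj; exact hj₀max j (by simp [hS_def, hj])
  refine ⟨j₀, hj₀w, hT j₀ hj₀w, hmax, ?_⟩
  intro N hN hNj₀
  have hTj₀pos : 0 < T j₀ := lt_trans hE (hT j₀ hj₀w)
  have hQpos : 0 < 2 * Q := by linarith
  -- restrict the sum to S
  have hsum1 : (∑ j, (w j : ℝ) * N j) = ∑ j ∈ S, (w j : ℝ) * N j := by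
    rw [hS_def]
    refine (Finset.sum_filter_of_ne ?_).symm
    intro j _ hj
    intro h0
    apply hj
    rw [h0]; simp
  have hsum2 : (∑ j ∈ S, (w j : ℝ) * N j)
      = (w j₀ : ℝ) * N j₀ + ∑ j ∈ S.erase j₀, (w j : ℝ) * N j :=
    (Finset.add_sum_erase S _ hj₀S).symm
  -- bound the erased sum
  have herase : |∑ j ∈ S.erase j₀, (w j : ℝ) * N j| ≤ T j₀ / 2 := by
    have hterm : ∀ j ∈ S.erase j₀, |(w j : ℝ) * N j| ≤ (|w j| : ℝ) * (T j₀ / (2 * Q)) := by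
      intro j hj
      obtain ⟨hne, hjS⟩ := Finset.mem_erase.1 hj
      have hjw : w j ≠ 0 := by simpa [hS_def] using hjS
      have hTle : T j ≤ T j₀ := hmax j hjw
      have hTsep : T j * (2 * Q) ≤ T j₀ := hsep j j₀ hjw hj₀w hne hTle
      have hTj : T j ≤ T j₀ / (2 * Q) := by
        rw [le_div_iff₀ hQpos]; exact hTsep
      rw [abs_mul]
      push_cast
      apply mul_le_mul_of_nonneg_left _ (abs_nonneg _)
      exact le_trans (hN j) hTj
    calc |∑ j ∈ S.erase j₀, (w j : ℝ) * N j| ≤ ∑ j ∈ S.erase j₀, |(w j : ℝ) * N j| :=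
        Finset.abs_sum_le_sum_abs _ _
      _ ≤ ∑ j ∈ S.erase j₀, (|w j| : ℝ) * (T j₀ / (2 * Q)) := Finset.sum_le_sum hterm
      _ = (∑ j ∈ S.erase j₀, (|w j| : ℝ)) * (T j₀ / (2 * Q)) := by
          rw [Finset.sum_mul]
      _ ≤ Q * (T j₀ / (2 * Q)) := by
          apply mul_le_mul_of_nonneg_right _ (by positivity)
          refine le_trans ?_ hw
          apply Finset.sum_le_sum_of_subset_of_nonneg (Finset.subset_univ _)
          intro j _ _; positivity
      _ = T j₀ / 2 := by field_simp
  have hlead : T j₀ ≤ |(w j₀ : ℝ) * N j₀| := by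
    rw [abs_mul, hNj₀]
    have h1 : (1 : ℝ) ≤ |(w j₀ : ℝ)| := by
      have := Int.one_le_abs hj₀w
      exact_mod_cast this
    nlinarith
  rw [hsum1, hsum2]
  have habs : |(w j₀ : ℝ) * N j₀| - |∑ j ∈ S.erase j₀, (w j : ℝ) * N j|
      ≤ |(w j₀ : ℝ) * N j₀ + ∑ j ∈ S.erase j₀, (w j : ℝ) * N j| := by
    have h := abs_add_le ((w j₀ : ℝ) * N j₀ + ∑ j ∈ S.erase j₀, (w j : ℝ) * N j)
      (-(∑ j ∈ S.erase j₀, (w j : ℝ) * N j))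
    simp only [add_neg_cancel_right, abs_neg] at h
    linarith
  linarith

set_option maxHeartbeats 1000000 in
/-- **Equidistribution under splitness (oscillatory-integral bound).** Fix `s ≥ 1`, `K > 0`
and integers `m_{j,c}`, not all zero. For every `ε' > 0` there is `A₀ > 0` such that for
every `A ≥ A₀`, every matrix `(a₁,b₁;a₂,b₂) ∈ G_η`, all integers `(k_j,l_j)` whose
associated points `t⁽ʲ⁾ = (⌊ln|a₁k_j+b₁l_j|⌋, ⌊ln|a₂k_j+b₂l_j|⌋)` form an `A`-split family,
all phases `φ_j`, and every `C¹` probability density `ρ` on `ℝ⁴` supported in `[-K,K]⁴`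
with `C¹`-norm at most `K`, the corresponding exponential-sum integral has modulus `≤ ε'`.
Consequently the joint distribution of the fractional parts
`({(a₁k_j+b₁l_j)u}, {(a₂k_j+b₂l_j)v}, {k_j x+l_j y+φ_j})_j` converges to the uniform
distribution on `𝕋^{3s}`, uniformly in the data. -/
theorem equidistribution_under_splitness (s : ℕ) (hs : 1 ≤ s) (K : ℝ) (hK : 0 < K)
    (m : Fin s → Fin 3 → ℤ) (hm : ∃ j c, m j c ≠ 0) :
    ∃ η₀ > (0 : ℝ), ∀ η : ℝ, 0 < η → η < η₀ →
    ∀ ε' : ℝ, 0 < ε' → ∃ A₀ : ℝ, 0 < A₀ ∧ ∀ A : ℝ, A₀ ≤ A →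
    ∀ a₁ b₁ a₂ b₂ : ℝ, a₁ * b₂ - b₁ * a₂ = 1 →
      |a₁ - 1| < η → |b₂ - 1| < η → |a₂| < η → |b₁| < η →
    ∀ k l : Fin s → ℤ,
      IsSplit A (fun j => (((⌊Real.log |a₁ * k j + b₁ * l j|⌋ : ℤ) : ℝ),
        ((⌊Real.log |a₂ * k j + b₂ * l j|⌋ : ℤ) : ℝ))) →
    ∀ φ : Fin s → ℝ,
    ∀ ρ : ℝ × ℝ × ℝ × ℝ → ℝ, ContDiff ℝ 1 ρ →
      (∀ w, |ρ w| ≤ K) → (∀ w, ‖fderiv ℝ ρ w‖ ≤ K) →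
      (∀ w, ρ w ≠ 0 →
        |w.1| ≤ K ∧ |w.2.1| ≤ K ∧ |w.2.2.1| ≤ K ∧ |w.2.2.2| ≤ K) →
      (∀ w, 0 ≤ ρ w) → (∫ w : ℝ × ℝ × ℝ × ℝ, ρ w = 1) →
      ‖∫ w : ℝ × ℝ × ℝ × ℝ,
          (∏ j, Complex.exp (2 * π * Complex.I *
            ((m j 0 * ((a₁ * k j + b₁ * l j) * w.1)
              + m j 1 * ((a₂ * k j + b₂ * l j) * w.2.1)
              + m j 2 * (k j * w.2.2.1 + l j * w.2.2.2 + φ j) : ℝ) : ℂ)))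
            * (ρ w : ℂ)‖ ≤ ε' := by
  classical
  have hπ : (0 : ℝ) < π := Real.pi_pos
  set Q : ℝ := (∑ j : Fin s, ∑ c : Fin 3, (|m j c| : ℝ)) + 1 with hQ_def
  clear_value Q
  have hQ1 : 1 ≤ Q := by
    have h0 : (0 : ℝ) ≤ ∑ j : Fin s, ∑ c : Fin 3, (|m j c| : ℝ) := by positivity
    rw [hQ_def]; linarith
  have hQpos : 0 < Q := by linarith
  refine ⟨1 / (4 * (1 + Q)), by positivity, ?_⟩
  intro η hηpos hηlt ε' hε'
  set X : ℝ := 32 * K ^ 4 * (2 * K + 2) / (2 * π * ε') with hX_def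
  clear_value X
  have hXpos : 0 < X := by rw [hX_def]; positivity
  refine ⟨max (Real.log (2 * Q) + 1) (max 1 (Real.log X + 1)),
    lt_of_lt_of_le one_pos (le_trans (le_max_left _ _) (le_max_right _ _)), ?_⟩
  intro A hA a₁ b₁ a₂ b₂ hdet ha₁ hb₂ ha₂ hb₁ k l hsplit φ ρ hρ hbρ hdρ hsuppρ hposρ hintρ
  have hA1 : 1 ≤ A := le_trans (le_trans (le_max_left _ _) (le_max_right _ _)) hA
  have hApos : 0 < A := by linarith
  have hsep2Q : 2 * Q ≤ Real.exp (A - 1) := by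
    have h1 : Real.log (2 * Q) + 1 ≤ A := le_trans (le_max_left _ _) hA
    calc 2 * Q = Real.exp (Real.log (2 * Q)) := (Real.exp_log (by linarith)).symm
      _ ≤ Real.exp (A - 1) := Real.exp_le_exp.2 (by linarith)
  have hXA : X ≤ Real.exp A := by
    have h1 : Real.log X + 1 ≤ A :=
      le_trans (le_trans (le_max_right _ _) (le_max_right _ _)) hA
    calc X = Real.exp (Real.log X) := (Real.exp_log hXpos).symm
      _ ≤ Real.exp A := Real.exp_le_exp.2 (by linarith)
  set N₁ : Fin s → ℝ := fun j => a₁ * (k j : ℝ) + b₁ * (l j : ℝ) with hN₁_def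
  set N₂ : Fin s → ℝ := fun j => a₂ * (k j : ℝ) + b₂ * (l j : ℝ) with hN₂_def
  have hN₁big : ∀ j, Real.exp A < |N₁ j| := by
    intro j
    have h1 : A < ((⌊Real.log |N₁ j|⌋ : ℤ) : ℝ) := (hsplit.1 j).1
    have h2 : ((⌊Real.log |N₁ j|⌋ : ℤ) : ℝ) ≤ Real.log |N₁ j| := Int.floor_le _
    have h3 : 0 < |N₁ j| := by
      rcases (abs_nonneg (N₁ j)).lt_or_eq with h | h
      · exact h
      · exfalso
        rw [← h, Real.log_zero] at h1
        norm_num at h1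
        linarith
    calc Real.exp A < Real.exp (Real.log |N₁ j|) := Real.exp_lt_exp.2 (by linarith)
      _ = |N₁ j| := Real.exp_log h3
  have hN₂big : ∀ j, Real.exp A < |N₂ j| := by
    intro j
    have h1 : A < ((⌊Real.log |N₂ j|⌋ : ℤ) : ℝ) := (hsplit.1 j).2
    have h2 : ((⌊Real.log |N₂ j|⌋ : ℤ) : ℝ) ≤ Real.log |N₂ j| := Int.floor_le _
    have h3 : 0 < |N₂ j| := by
      rcases (abs_nonneg (N₂ j)).lt_or_eq with h | h
      · exact h
      · exfalso
        rw [← h, Real.log_zero] at h1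
        norm_num at h1
        linarith
    calc Real.exp A < Real.exp (Real.log |N₂ j|) := Real.exp_lt_exp.2 (by linarith)
      _ = |N₂ j| := Real.exp_log h3
  have hT₁pos : ∀ j, 0 < |N₁ j| := fun j => lt_trans (Real.exp_pos A) (hN₁big j)
  have hT₂pos : ∀ j, 0 < |N₂ j| := fun j => lt_trans (Real.exp_pos A) (hN₂big j)
  have hsep₁ : ∀ i j : Fin s, i ≠ j → |N₁ i| ≤ |N₁ j| → |N₁ i| * (2 * Q) ≤ |N₁ j| := by
    intro i j hij hle
    exact ratio_sep _ _ A Q (hT₁pos i) (hT₁pos j) hsep2Q (hsplit.2 i j hij).1 hle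
  have hsep₂ : ∀ i j : Fin s, i ≠ j → |N₂ i| ≤ |N₂ j| → |N₂ i| * (2 * Q) ≤ |N₂ j| := by
    intro i j hij hle
    exact ratio_sep _ _ A Q (hT₂pos i) (hT₂pos j) hsep2Q (hsplit.2 i j hij).2.1 hle
  have hcastmax : ∀ i : Fin s, ((⌊Real.log (max |N₁ i| |N₂ i|)⌋ : ℤ) : ℝ)
      = max ((⌊Real.log |N₁ i|⌋ : ℤ) : ℝ) ((⌊Real.log |N₂ i|⌋ : ℤ) : ℝ) := by
    intro i
    rw [floor_log_max _ _ (hT₁pos i) (hT₂pos i)]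
    simp [Int.cast_max]
  have hsepmax : ∀ i j : Fin s, i ≠ j → max |N₁ i| |N₂ i| ≤ max |N₁ j| |N₂ j| →
      max |N₁ i| |N₂ i| * (2 * Q) ≤ max |N₁ j| |N₂ j| := by
    intro i j hij hle
    refine ratio_sep _ _ A Q (lt_max_of_lt_left (hT₁pos i)) (lt_max_of_lt_left (hT₁pos j))
      hsep2Q ?_ hle
    rw [hcastmax i, hcastmax j]
    exact (hsplit.2 i j hij).2.2
  clear_value N₁ N₂
  set c₁ : ℝ := ∑ j, (m j 0 : ℝ) * N₁ j with hc₁_def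
  set c₂ : ℝ := ∑ j, (m j 1 : ℝ) * N₂ j with hc₂_def
  set c₃ : ℝ := ∑ j, (m j 2 : ℝ) * (k j : ℝ) with hc₃_def
  set c₄ : ℝ := ∑ j, (m j 2 : ℝ) * (l j : ℝ) with hc₄_def
  set θ : ℝ := ∑ j, (m j 2 : ℝ) * φ j with hθ_def
  clear_value c₁ c₂ c₃ c₄ θ
  -- rewrite the integrand into canonical form
  have hprod : ∀ w : ℝ × ℝ × ℝ × ℝ,
      (∏ j, Complex.exp (2 * π * Complex.I *
        ((m j 0 * ((a₁ * k j + b₁ * l j) * w.1)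
          + m j 1 * ((a₂ * k j + b₂ * l j) * w.2.1)
          + m j 2 * (k j * w.2.2.1 + l j * w.2.2.2 + φ j) : ℝ) : ℂ)))
      = Complex.exp (2 * π * Complex.I *
        ((c₁ * w.1 + c₂ * w.2.1 + c₃ * w.2.2.1 + c₄ * w.2.2.2 + θ : ℝ) : ℂ)) := by
    intro w
    rw [← Complex.exp_sum]
    congr 1
    rw [← Finset.mul_sum]
    congr 1
    rw [← Complex.ofReal_sum]
    congr 1
    rw [hc₁_def, hc₂_def, hc₃_def, hc₄_def, hθ_def]
    simp only [Finset.sum_mul]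
    rw [← Finset.sum_add_distrib, ← Finset.sum_add_distrib, ← Finset.sum_add_distrib,
      ← Finset.sum_add_distrib]
    apply Finset.sum_congr rfl
    intro j _
    rw [hN₁_def, hN₂_def]
    push_cast
    ring
  have hinteq : (∫ w : ℝ × ℝ × ℝ × ℝ,
      (∏ j, Complex.exp (2 * π * Complex.I *
        ((m j 0 * ((a₁ * k j + b₁ * l j) * w.1)
          + m j 1 * ((a₂ * k j + b₂ * l j) * w.2.1)
          + m j 2 * (k j * w.2.2.1 + l j * w.2.2.2 + φ j) : ℝ) : ℂ)))
        * (ρ w : ℂ))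
      = ∫ w : ℝ × ℝ × ℝ × ℝ, Complex.exp (2 * π * Complex.I *
          ((c₁ * w.1 + c₂ * w.2.1 + c₃ * w.2.2.1 + c₄ * w.2.2.2 + θ : ℝ) : ℂ)) * (ρ w : ℂ) := by
    congr 1
    funext w
    rw [hprod w]
  set M₀ : ℝ := Real.exp A / 4 with hM₀_def
  clear_value M₀
  have hM₀pos : 0 < M₀ := by rw [hM₀_def]; positivity
  have hwQ : ∀ c : Fin 3, (∑ j, (|m j c| : ℝ)) ≤ Q := by
    intro c
    rw [hQ_def]
    have h1 : ∀ j : Fin s, (|m j c| : ℝ) ≤ ∑ c' : Fin 3, (|m j c'| : ℝ) :=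
      fun j => Finset.single_le_sum (f := fun c' => (|m j c'| : ℝ))
        (fun c' _ => abs_nonneg _) (Finset.mem_univ c)
    have h2 := Finset.sum_le_sum (fun j (_ : j ∈ Finset.univ) => h1 j)
    linarith
  have hcase : M₀ ≤ |c₁| ∨ M₀ ≤ |c₂| ∨ M₀ ≤ |c₃| ∨ M₀ ≤ |c₄| := by
    by_cases h0 : ∃ j, m j 0 ≠ 0
    · left
      obtain ⟨j₀, hj₀, hTbig, hmax, hdom⟩ := dominant (fun j => m j 0) (fun j => |N₁ j|)
        (Real.exp A) Q (Real.exp_pos A) hQ1 h0 (fun j _ => hN₁big j) (hwQ 0)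
        (fun i j _ _ hij hle => hsep₁ i j hij hle)
      have hlow := hdom N₁ (fun j => le_refl _) rfl
      rw [hM₀_def]
      calc Real.exp A / 4 ≤ |N₁ j₀| / 2 := by linarith [hTbig]
        _ ≤ |∑ j, (m j 0 : ℝ) * N₁ j| := hlow
        _ = |c₁| := by rw [hc₁_def]
    · by_cases h1 : ∃ j, m j 1 ≠ 0
      · right; left
        obtain ⟨j₀, hj₀, hTbig, hmax, hdom⟩ := dominant (fun j => m j 1) (fun j => |N₂ j|)
          (Real.exp A) Q (Real.exp_pos A) hQ1 h1 (fun j _ => hN₂big j) (hwQ 1)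
          (fun i j _ _ hij hle => hsep₂ i j hij hle)
        have hlow := hdom N₂ (fun j => le_refl _) rfl
        rw [hM₀_def]
        calc Real.exp A / 4 ≤ |N₂ j₀| / 2 := by linarith [hTbig]
          _ ≤ |∑ j, (m j 1 : ℝ) * N₂ j| := hlow
          _ = |c₂| := by rw [hc₂_def]
      · have h2 : ∃ j, m j 2 ≠ 0 := by
          obtain ⟨j, c, hc⟩ := hm
          push_neg at h0 h1
          fin_cases c
          · exact absurd (h0 j) hc
          · exact absurd (h1 j) hc
          · exact ⟨j, hc⟩
        obtain ⟨j₀, hj₀, hTbig, hmax, hdom⟩ := dominant (fun j => m j 2)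
          (fun j => max |N₁ j| |N₂ j|) (Real.exp A) Q (Real.exp_pos A) hQ1 h2
          (fun j _ => lt_max_of_lt_left (hN₁big j)) (hwQ 2)
          (fun i j _ _ hij hle => hsepmax i j hij hle)
        have hTbig' : Real.exp A < max |N₁ j₀| |N₂ j₀| := hTbig
        set T0 : ℝ := max |N₁ j₀| |N₂ j₀| with hT0_def
        clear_value T0
        have hT0pos : 0 < T0 := lt_trans (Real.exp_pos A) hTbig'
        set P₁ : ℝ := ∑ j, (m j 2 : ℝ) * N₁ j with hP₁_def
        set P₂ : ℝ := ∑ j, (m j 2 : ℝ) * N₂ j with hP₂_def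
        clear_value P₁ P₂
        have hmax' : ∀ j, m j 2 ≠ 0 → max |N₁ j| |N₂ j| ≤ T0 := hmax
        have hupper : ∀ Nf : Fin s → ℝ, (∀ j, |Nf j| ≤ max |N₁ j| |N₂ j|) →
            |∑ j, (m j 2 : ℝ) * Nf j| ≤ Q * T0 := by
          intro Nf hNf
          calc |∑ j, (m j 2 : ℝ) * Nf j| ≤ ∑ j, |(m j 2 : ℝ) * Nf j| :=
              Finset.abs_sum_le_sum_abs _ _
            _ ≤ ∑ j, (|m j 2| : ℝ) * T0 := by
                apply Finset.sum_le_sum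
                intro j _
                by_cases hj : m j 2 = 0
                · simp [hj]
                · rw [abs_mul, ← Int.cast_abs]
                  exact mul_le_mul_of_nonneg_left
                    (le_trans (hNf j) (hmax' j hj)) (by positivity)
            _ = (∑ j, (|m j 2| : ℝ)) * T0 := by rw [Finset.sum_mul]
            _ ≤ Q * T0 := mul_le_mul_of_nonneg_right (hwQ 2) hT0pos.le
        have hP₁u : |P₁| ≤ Q * T0 := by
          rw [hP₁_def]; exact hupper N₁ (fun j => le_max_left _ _)
        have hP₂u : |P₂| ≤ Q * T0 := by
          rw [hP₂_def]; exact hupper N₂ (fun j => le_max_right _ _)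
        have hk_eq : ∀ j, (k j : ℝ) = b₂ * N₁ j - b₁ * N₂ j := by
          intro j
          have hh : b₂ * N₁ j - b₁ * N₂ j = (a₁ * b₂ - b₁ * a₂) * (k j : ℝ) := by
            simp only [hN₁_def, hN₂_def]; ring
          rw [hh, hdet, one_mul]
        have hl_eq : ∀ j, (l j : ℝ) = a₁ * N₂ j - a₂ * N₁ j := by
          intro j
          have hh : a₁ * N₂ j - a₂ * N₁ j = (a₁ * b₂ - b₁ * a₂) * (l j : ℝ) := by
            simp only [hN₁_def, hN₂_def]; ring
          rw [hh, hdet, one_mul]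
        have hc₃eq : c₃ = b₂ * P₁ - b₁ * P₂ := by
          rw [hc₃_def, hP₁_def, hP₂_def, Finset.mul_sum, Finset.mul_sum,
            ← Finset.sum_sub_distrib]
          apply Finset.sum_congr rfl
          intro j _
          rw [hk_eq j]; ring
        have hc₄eq : c₄ = a₁ * P₂ - a₂ * P₁ := by
          rw [hc₄_def, hP₁_def, hP₂_def, Finset.mul_sum, Finset.mul_sum,
            ← Finset.sum_sub_distrib]
          apply Finset.sum_congr rfl
          intro j _
          rw [hl_eq j]; ring
        have hη8 : η * (1 + Q) < 1 / 4 := by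
          rw [lt_div_iff₀ (by positivity : (0:ℝ) < 4 * (1 + Q))] at hηlt
          linarith only [hηlt]
        have hb₂low : 1 - η ≤ |b₂| := by
          have h := abs_sub_abs_le_abs_sub (1 : ℝ) b₂
          rw [abs_one, abs_sub_comm] at h
          linarith
        have ha₁low : 1 - η ≤ |a₁| := by
          have h := abs_sub_abs_le_abs_sub (1 : ℝ) a₁
          rw [abs_one, abs_sub_comm] at h
          linarith
        have hE2 : Real.exp A ≤ T0 := hTbig'.le
        rcases le_total |N₂ j₀| |N₁ j₀| with hmc | hmc
        · right; right; left
          have hT0eq : |N₁ j₀| = T0 := by rw [hT0_def, max_eq_left hmc]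
          have hP₁l : T0 / 2 ≤ |P₁| := by
            rw [hP₁_def]
            exact hdom N₁ (fun j => le_max_left _ _) hT0eq
          have habs2 : |b₂| * |P₁| - |b₁| * |P₂| ≤ |c₃| := by
            rw [hc₃eq, ← abs_mul, ← abs_mul]
            exact abs_sub_abs_le_abs_sub _ _
          have h1 : (1 - η) * (T0 / 2) ≤ |b₂| * |P₁| :=
            mul_le_mul hb₂low hP₁l (by positivity) (abs_nonneg _)
          have h2 : |b₁| * |P₂| ≤ η * (Q * T0) :=
            mul_le_mul hb₁.le hP₂u (abs_nonneg _) hηpos.le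
          have h3 : η * (1 + Q) * T0 ≤ 1 / 4 * T0 :=
            mul_le_mul_of_nonneg_right hη8.le hT0pos.le
          have h4 : 0 ≤ η * T0 := mul_nonneg hηpos.le hT0pos.le
          rw [hM₀_def]
          linarith only [h3, h4, habs2, h1, h2, hE2]
        · right; right; right
          have hT0eq : |N₂ j₀| = T0 := by rw [hT0_def, max_eq_right hmc]
          have hP₂l : T0 / 2 ≤ |P₂| := by
            rw [hP₂_def]
            exact hdom N₂ (fun j => le_max_right _ _) hT0eq
          have habs2 : |a₁| * |P₂| - |a₂| * |P₁| ≤ |c₄| := by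
            rw [hc₄eq, ← abs_mul, ← abs_mul]
            exact abs_sub_abs_le_abs_sub _ _
          have h1 : (1 - η) * (T0 / 2) ≤ |a₁| * |P₂| :=
            mul_le_mul ha₁low hP₂l (by positivity) (abs_nonneg _)
          have h2 : |a₂| * |P₁| ≤ η * (Q * T0) :=
            mul_le_mul ha₂.le hP₁u (abs_nonneg _) hηpos.le
          have h3 : η * (1 + Q) * T0 ≤ 1 / 4 * T0 :=
            mul_le_mul_of_nonneg_right hη8.le hT0pos.le
          have h4 : 0 ≤ η * T0 := mul_nonneg hηpos.le hT0pos.le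
          rw [hM₀_def]
          linarith only [h3, h4, habs2, h1, h2, hE2]
  rw [hinteq]
  refine le_trans (key K M₀ c₁ c₂ c₃ c₄ θ hK hM₀pos hcase ρ hρ hbρ hdρ hsuppρ) ?_
  rw [hM₀_def]
  have hexpApos : (0:ℝ) < Real.exp A := Real.exp_pos A
  have hXmul : 32 * K ^ 4 * (2 * K + 2) = X * (2 * π * ε') := by
    rw [hX_def]; field_simp
  have heq : (2 * K + 2) * K / (2 * π * (Real.exp A / 4)) * (8 * K ^ 3)
      = 32 * K ^ 4 * (2 * K + 2) / (2 * π * Real.exp A) := by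
    field_simp; ring
  rw [heq, div_le_iff₀ (by positivity)]
  calc 32 * K ^ 4 * (2 * K + 2) = X * (2 * π * ε') := hXmul
    _ ≤ Real.exp A * (2 * π * ε') := mul_le_mul_of_nonneg_right hXA (by positivity)
    _ = ε' * (2 * π * Real.exp A) := by ring
end
end

section
/- (Counting frequencies in a dyadic product range.) For η > 0 sufficiently small there is a constant C = C(d,η) such that for every integer N ≥ 3, every integer s ≥ 0, and every A ∈ G_η: #{k ∈ ℤ^d : |k_i| ≤ N for all i, |k̄_i| ≥ 1 for all i, and 2^s N ≤ ∏_i |k̄_i| ≤ 2^{s+1} N} ≤ C · 2^s · N · (ln N + s)^{d−1}. -/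
open MeasureTheory Real Filter

noncomputable section

/-- `SL(d, ℝ)`. -/
abbrev SLR (d : ℕ) := Matrix.SpecialLinearGroup (Fin d) ℝ

/-- The set `G_η` of matrices in `SL(d,ℝ)` whose entries are `η`-close to the identity. -/
def Gset (d : ℕ) (η : ℝ) : Set (SLR d) :=
  {A | (∀ i, |A.1 i i - 1| < η) ∧ ∀ i j, i ≠ j → |A.1 i j| < η}

/-- The dual coordinates `k̄_i = Σ_j a_{ij} k_j`. -/
def kbar (d : ℕ) (A : SLR d) (k : Fin d → ℤ) (i : Fin d) : ℝ :=
  ∑ j, A.1 i j * (k j : ℝ)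

/-- `k·α = Σ_i k_i α_i`. -/
def dotP (d : ℕ) (k : Fin d → ℤ) (α : Fin d → ℝ) : ℝ := ∑ i, (k i : ℝ) * α i

/-- The Fourier term `U_k(ξ,N)` of the discrepancy. -/
def Uk (d : ℕ) (A : SLR d) (u α x : Fin d → ℝ) (N : ℕ) (k : Fin d → ℤ) : ℝ :=
  (π ^ d)⁻¹ * (∏ i, Real.sin (2 * π * kbar d A k i * u i) / kbar d A k i) *
    (Real.sin (π * N * dotP d k α) / Real.sin (π * dotP d k α)) *
    Real.cos (2 * π * dotP d k x + π * (N + 1) * dotP d k α)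

/-- The fundamental domain `[0,1)^d` of the torus `𝕋^d`. -/
def cube (d : ℕ) : Set (Fin d → ℝ) := Set.univ.pi fun _ => Set.Ico (0 : ℝ) 1

lemma kbar_sub (d : ℕ) (A : SLR d) (k k' : Fin d → ℤ) (i : Fin d) :
    kbar d A (k - k') i = kbar d A k i - kbar d A k' i := by
  unfold kbar
  rw [← Finset.sum_sub_distrib]
  refine Finset.sum_congr rfl fun j _ => ?_
  have : ((k - k') j : ℝ) = (k j : ℝ) - (k' j : ℝ) := by
    simp [Pi.sub_apply]
  rw [this]; ring


/-- If `A` is `η`-close to the identity with `η d ≤ 1/2`, any integer vector `v`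
with all `|v̄_i| < 1` has all coordinates of absolute value at most `2`. -/
lemma small_sol {d : ℕ} {η : ℝ} (hη : 0 < η) (hηd : η * d ≤ 1 / 2) (A : SLR d)
    (hA : A ∈ Gset d η) (v : Fin d → ℤ) (hv : ∀ i, |kbar d A v i| < 1) :
    ∀ j, |v j| ≤ 2 := by
  intro j
  obtain ⟨j₀, -, hmax⟩ := Finset.exists_max_image Finset.univ (fun j => |v j|)
    ⟨j, Finset.mem_univ j⟩
  have hmax' : ∀ j', |v j'| ≤ |v j₀| := fun j' => hmax j' (Finset.mem_univ j')
  suffices h : |v j₀| ≤ 2 from le_trans (hmax' j) h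
  set M : ℝ := ((|v j₀| : ℤ) : ℝ) with hM
  have hM0 : 0 ≤ M := by positivity
  have hdiff : kbar d A v j₀ - (v j₀ : ℝ)
      = ∑ j', (A.1 j₀ j' - if j₀ = j' then 1 else 0) * (v j' : ℝ) := by
    unfold kbar
    rw [show ((v j₀ : ℝ)) = ∑ j', (if j₀ = j' then (1:ℝ) else 0) * (v j' : ℝ) by
      simp [ite_mul]]
    rw [← Finset.sum_sub_distrib]
    refine Finset.sum_congr rfl fun j' _ => by ring
  have hterm : ∀ j', |(A.1 j₀ j' - if j₀ = j' then 1 else 0) * (v j' : ℝ)| ≤ η * M := by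
    intro j'
    rw [abs_mul]
    have h1 : |A.1 j₀ j' - if j₀ = j' then 1 else 0| ≤ η := by
      by_cases h : j₀ = j'
      · subst h; simpa using (hA.1 j₀).le
      · simpa [h] using (hA.2 j₀ j' h).le
    have h2 : |(v j' : ℝ)| ≤ M := by
      rw [hM, ← Int.cast_abs]
      exact_mod_cast hmax' j'
    exact mul_le_mul h1 h2 (abs_nonneg _) hη.le
  have hsum : |kbar d A v j₀ - (v j₀ : ℝ)| ≤ η * d * M := by
    rw [hdiff]
    calc |∑ j', (A.1 j₀ j' - if j₀ = j' then 1 else 0) * (v j' : ℝ)|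
        ≤ ∑ j', |(A.1 j₀ j' - if j₀ = j' then 1 else 0) * (v j' : ℝ)| :=
          Finset.abs_sum_le_sum_abs _ _
      _ ≤ ∑ _j' : Fin d, η * M := Finset.sum_le_sum fun j' _ => hterm j'
      _ = η * d * M := by simp [Finset.sum_const, Finset.card_univ]; ring
  have hMle : M ≤ |kbar d A v j₀| + η * d * M := by
    have : M = |(v j₀ : ℝ)| := by rw [hM, ← Int.cast_abs]
    calc M = |(v j₀ : ℝ)| := this
      _ ≤ |kbar d A v j₀| + |kbar d A v j₀ - (v j₀ : ℝ)| := by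
          have := abs_sub_abs_le_abs_sub (kbar d A v j₀) ((v j₀ : ℝ))
          have h := abs_sub (kbar d A v j₀) ((v j₀:ℝ))
          calc |(v j₀ : ℝ)| = |kbar d A v j₀ - (kbar d A v j₀ - (v j₀ : ℝ))| := by ring_nf
            _ ≤ |kbar d A v j₀| + |kbar d A v j₀ - (v j₀ : ℝ)| := abs_sub _ _
      _ ≤ |kbar d A v j₀| + η * d * M := by linarith [hsum]
  have hdM : η * (d : ℝ) * M ≤ M / 2 := by nlinarith
  have hMlt : M < 2 := by
    have := hv j₀
    nlinarith
  rw [hM] at hMlt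
  have : (|v j₀| : ℤ) < 2 := by exact_mod_cast hMlt
  omega

open scoped Classical in
/-- The set of tuples of positive integers with product at most `Q`. -/
def msetF (d : ℕ) (Q : ℝ) : Finset (Fin d → ℕ) :=
  (Fintype.piFinset fun _ : Fin d => Finset.Icc 1 ⌊Q⌋₊).filter fun m => (∏ i, (m i : ℝ)) ≤ Q

lemma sum_inv_le (n : ℕ) : ∑ a ∈ Finset.Icc 1 n, ((a : ℝ))⁻¹ ≤ 1 + Real.log n := by
  have h := harmonic_le_one_add_log n
  have : (harmonic n : ℝ) = ∑ a ∈ Finset.Icc 1 n, ((a : ℝ))⁻¹ := by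
    rw [harmonic_eq_sum_Icc]; push_cast; rfl
  linarith [this ▸ h]

lemma msetF_card (e : ℕ) : ∀ Q : ℝ, 1 ≤ Q →
    ((msetF (e + 1) Q).card : ℝ) ≤ Q * (1 + Real.log Q) ^ e := by
  induction e with
  | zero =>
    intro Q hQ
    have h1 : (msetF 1 Q).card ≤ ⌊Q⌋₊ := by
      calc (msetF 1 Q).card ≤ (Fintype.piFinset fun _ : Fin 1 => Finset.Icc 1 ⌊Q⌋₊).card :=
            Finset.card_filter_le _ _
        _ = ⌊Q⌋₊ := by simp [Fintype.card_piFinset]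
    calc ((msetF 1 Q).card : ℝ) ≤ (⌊Q⌋₊ : ℝ) := by exact_mod_cast h1
      _ ≤ Q := Nat.floor_le (by linarith)
      _ = Q * (1 + Real.log Q) ^ 0 := by ring
  | succ e ih =>
    intro Q hQ
    have hQ0 : (0 : ℝ) < Q := by linarith
    have hlogQ : 0 ≤ Real.log Q := Real.log_nonneg hQ
    have key : (msetF (e + 2) Q).card
        = ∑ a ∈ Finset.Icc 1 ⌊Q⌋₊, ((msetF (e + 2) Q).filter fun m => m 0 = a).card := by
      refine Finset.card_eq_sum_card_fiberwise fun m hm => ?_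
      rw [Finset.mem_coe, msetF, Finset.mem_filter, Fintype.mem_piFinset] at hm
      exact hm.1 0
    have hfib : ∀ a ∈ Finset.Icc 1 ⌊Q⌋₊,
        (((msetF (e + 2) Q).filter fun m => m 0 = a).card : ℝ)
          ≤ (Q / a) * (1 + Real.log Q) ^ e := by
      intro a ha
      rw [Finset.mem_Icc] at ha
      have ha1 : 1 ≤ a := ha.1
      have haR : (1 : ℝ) ≤ (a : ℝ) := by exact_mod_cast ha1
      have haQ : (a : ℝ) ≤ Q := le_trans (by exact_mod_cast ha.2) (Nat.floor_le hQ0.le)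
      have ha0 : (0 : ℝ) < (a : ℝ) := by linarith
      have hQa1 : 1 ≤ Q / a := (one_le_div ha0).mpr haQ
      have hQa0 : 0 < Q / a := by linarith
      -- inject the fiber into `msetF (e+1) (Q/a)` via `Fin.tail`
      have hcard : ((msetF (e + 2) Q).filter fun m => m 0 = a).card
          ≤ (msetF (e + 1) (Q / a)).card := by
        refine Finset.card_le_card_of_injOn Fin.tail ?_ ?_
        · intro m hm
          rw [Finset.mem_coe, Finset.mem_filter] at hm
          obtain ⟨hm, hm0⟩ := hm
          rw [msetF, Finset.mem_filter, Fintype.mem_piFinset] at hm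
          obtain ⟨hmem, hprod⟩ := hm
          have hone : ∀ j, 1 ≤ m j := fun j => (Finset.mem_Icc.mp (hmem j)).1
          have honeR : ∀ j : Fin (e + 1), (1 : ℝ) ≤ ((Fin.tail m j : ℕ) : ℝ) := fun j => by
            exact_mod_cast hone j.succ
          have hsplit : (∏ i, (m i : ℝ)) = (a : ℝ) * ∏ j, ((Fin.tail m j : ℕ) : ℝ) := by
            rw [Fin.prod_univ_succ, hm0]; rfl
          have htailprod : (∏ j, ((Fin.tail m j : ℕ) : ℝ)) ≤ Q / a := by
            rw [le_div_iff₀ ha0, mul_comm]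
            calc (a : ℝ) * ∏ j, ((Fin.tail m j : ℕ) : ℝ) = ∏ i, (m i : ℝ) := hsplit.symm
              _ ≤ Q := hprod
          rw [Finset.mem_coe, msetF, Finset.mem_filter, Fintype.mem_piFinset]
          refine ⟨fun j => Finset.mem_Icc.mpr ⟨hone j.succ, ?_⟩, htailprod⟩
          refine Nat.le_floor ?_
          have hnat : Fin.tail m j ≤ ∏ j', Fin.tail m j' :=
            Finset.single_le_prod' (fun j' _ => hone j'.succ) (Finset.mem_univ j)
          calc ((Fin.tail m j : ℕ) : ℝ) ≤ ((∏ j', Fin.tail m j' : ℕ) : ℝ) := by exact_mod_cast hnat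
            _ = ∏ j', ((Fin.tail m j' : ℕ) : ℝ) := by push_cast; rfl
            _ ≤ Q / a := htailprod
        · intro m hm m' hm' htail
          rw [Finset.mem_coe, Finset.mem_filter] at hm hm'
          have : Fin.cons (m 0) (Fin.tail m) = Fin.cons (m' 0) (Fin.tail m') := by
            rw [hm.2, hm'.2, htail]
          rw [Fin.cons_self_tail, Fin.cons_self_tail] at this
          exact this
      calc (((msetF (e + 2) Q).filter fun m => m 0 = a).card : ℝ)
          ≤ ((msetF (e + 1) (Q / a)).card : ℝ) := by exact_mod_cast hcard
        _ ≤ (Q / a) * (1 + Real.log (Q / a)) ^ e := ih _ hQa1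
        _ ≤ (Q / a) * (1 + Real.log Q) ^ e := by
            refine mul_le_mul_of_nonneg_left (pow_le_pow_left₀ ?_ ?_ e) hQa0.le
            · have := Real.log_nonneg hQa1; linarith
            · have : Real.log (Q / a) ≤ Real.log Q :=
                Real.log_le_log hQa0 (by rw [div_le_iff₀ ha0]; nlinarith)
              linarith
    calc ((msetF (e + 2) Q).card : ℝ)
        = ∑ a ∈ Finset.Icc 1 ⌊Q⌋₊, (((msetF (e + 2) Q).filter fun m => m 0 = a).card : ℝ) := by
          rw [key]; push_cast; rfl
      _ ≤ ∑ a ∈ Finset.Icc 1 ⌊Q⌋₊, (Q / a) * (1 + Real.log Q) ^ e :=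
          Finset.sum_le_sum hfib
      _ = Q * (1 + Real.log Q) ^ e * ∑ a ∈ Finset.Icc 1 ⌊Q⌋₊, ((a : ℝ))⁻¹ := by
          rw [Finset.mul_sum]; refine Finset.sum_congr rfl fun a _ => by ring
      _ ≤ Q * (1 + Real.log Q) ^ e * (1 + Real.log ⌊Q⌋₊) :=
          mul_le_mul_of_nonneg_left (sum_inv_le _) (by positivity)
      _ ≤ Q * (1 + Real.log Q) ^ e * (1 + Real.log Q) := by
          refine mul_le_mul_of_nonneg_left ?_ (by positivity)
          have h1 : Real.log ⌊Q⌋₊ ≤ Real.log Q := by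
            rcases Nat.eq_zero_or_pos ⌊Q⌋₊ with h | h
            · simp [h]; exact Real.log_nonneg hQ
            · exact Real.log_le_log (by exact_mod_cast h) (Nat.floor_le hQ0.le)
          linarith
      _ = Q * (1 + Real.log Q) ^ (e + 1) := by ring

lemma log_est (d s N : ℕ) (hN : 3 ≤ N) :
    1 + Real.log (2 ^ (d + 1 + s) * (N : ℝ)) ≤ ((d : ℝ) + 3) * (Real.log N + s) := by
  have hN3 : (3 : ℝ) ≤ (N : ℝ) := by exact_mod_cast hN
  have hN0 : (0 : ℝ) < (N : ℝ) := by linarith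
  have hlog2 : Real.log 2 ≤ 1 := by linarith [Real.log_two_lt_d9]
  have hlogN1 : 1 ≤ Real.log N := by
    have h3 : (1 : ℝ) ≤ Real.log 3 := by
      rw [Real.le_log_iff_exp_le (by norm_num : (0:ℝ) < 3)]
      calc Real.exp 1 ≤ 2.7182818286 := Real.exp_one_lt_d9.le
        _ ≤ 3 := by norm_num
    calc (1 : ℝ) ≤ Real.log 3 := h3
      _ ≤ Real.log N := Real.log_le_log (by norm_num) hN3
  have hlogQ : Real.log (2 ^ (d + 1 + s) * (N : ℝ))
      = ((d + 1 + s : ℕ) : ℝ) * Real.log 2 + Real.log N := by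
    rw [Real.log_mul (by positivity) (by positivity), Real.log_pow]
  rw [hlogQ]
  push_cast
  have hd0 : (0 : ℝ) ≤ (d : ℝ) := by positivity
  have hs0 : (0 : ℝ) ≤ (s : ℝ) := by positivity
  have hA' : ((d : ℝ) + 1 + s) * Real.log 2 ≤ (d : ℝ) + 1 + s := by
    nlinarith [Real.log_nonneg (by norm_num : (1:ℝ) ≤ 2)]
  have hB : (d : ℝ) + 2 ≤ ((d : ℝ) + 2) * Real.log N := by nlinarith
  have hC : (s : ℝ) ≤ ((d : ℝ) + 3) * s := by nlinarith
  nlinarith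

/-- **Counting frequencies in a dyadic range of the product of dual coordinates**:
for `η` small there is `C = C(d,η)` with
`#{k : |k_i| ≤ N, |k̄_i| ≥ 1, 2^s N ≤ ∏ |k̄_i| ≤ 2^{s+1} N} ≤ C 2^s N (ln N + s)^{d-1}`. -/
theorem dyadic_frequency_count (d : ℕ) (hd : 1 ≤ d) :
    ∃ η₀ > (0 : ℝ), ∀ η : ℝ, 0 < η → η < η₀ →
    ∃ C : ℝ, ∀ N : ℕ, 3 ≤ N → ∀ s : ℕ, ∀ A : SLR d, A ∈ Gset d η →
      (Set.ncard {k : Fin d → ℤ | (∀ i, |k i| ≤ (N : ℤ)) ∧ (∀ i, 1 ≤ |kbar d A k i|) ∧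
          2 ^ s * (N : ℝ) ≤ ∏ i, |kbar d A k i| ∧
          ∏ i, |kbar d A k i| ≤ 2 ^ (s + 1) * (N : ℝ)} : ℝ)
        ≤ C * 2 ^ s * N * (Real.log N + s) ^ (d - 1) := by
  classical
  have hd0 : (0 : ℝ) < d := by exact_mod_cast hd
  refine ⟨1 / (2 * d), by positivity, ?_⟩
  intro η hη hηlt
  have hηd : η * d ≤ 1 / 2 := by
    have h : (1 / (2 * (d : ℝ))) * d = 1 / 2 := by field_simp
    nlinarith
  refine ⟨(5 : ℝ) ^ d * 2 ^ d * 2 ^ (d + 1) * ((d : ℝ) + 3) ^ (d - 1), ?_⟩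
  intro N hN s A hA
  have hN3 : (3 : ℝ) ≤ (N : ℝ) := by exact_mod_cast hN
  have hN0 : (0 : ℝ) < (N : ℝ) := by linarith
  -- the set as a finset
  set S : Finset (Fin d → ℤ) :=
    (Fintype.piFinset fun _ : Fin d => Finset.Icc (-(N : ℤ)) N).filter
      (fun k => (∀ i, 1 ≤ |kbar d A k i|) ∧ 2 ^ s * (N : ℝ) ≤ ∏ i, |kbar d A k i| ∧
        ∏ i, |kbar d A k i| ≤ 2 ^ (s + 1) * (N : ℝ)) with hS
  have hset : {k : Fin d → ℤ | (∀ i, |k i| ≤ (N : ℤ)) ∧ (∀ i, 1 ≤ |kbar d A k i|) ∧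
      2 ^ s * (N : ℝ) ≤ ∏ i, |kbar d A k i| ∧
      ∏ i, |kbar d A k i| ≤ 2 ^ (s + 1) * (N : ℝ)} = ↑S := by
    ext k
    simp only [Set.mem_setOf_eq, hS, Finset.coe_filter, Fintype.mem_piFinset,
      Finset.mem_Icc, Set.mem_setOf_eq, abs_le]
  rw [hset, Set.ncard_coe_finset]
  -- the two auxiliary maps
  set fvec : (Fin d → ℤ) → (Fin d → ℤ) := fun k i => ⌊kbar d A k i⌋ with hfvec
  set natvec : (Fin d → ℤ) → (Fin d → ℕ) := fun n i => (n i).natAbs with hnatvec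
  set T : Finset (Fin d → ℤ) := S.image fvec with hT
  set Q : ℝ := 2 ^ (d + 1 + s) * (N : ℝ) with hQ
  have hQ1 : (1 : ℝ) ≤ Q := by
    have h2 : (1 : ℝ) ≤ 2 ^ (d + 1 + s) := one_le_pow₀ (by norm_num)
    nlinarith
  have hQ0 : (0 : ℝ) < Q := by linarith
  -- Step 1 : fibers of fvec on S have at most 5^d elements
  have step1 : S.card ≤ 5 ^ d * T.card := by
    refine Finset.card_le_mul_card_image S (5 ^ d) ?_
    intro b _
    rcases Finset.eq_empty_or_nonempty (S.filter fun k => fvec k = b) with h | ⟨k₀, hk₀⟩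
    · simp [h]
    have hk₀S := (Finset.mem_filter.mp hk₀).1
    have hk₀b := (Finset.mem_filter.mp hk₀).2
    calc (S.filter fun k => fvec k = b).card
        ≤ (Fintype.piFinset fun _ : Fin d => Finset.Icc (-2 : ℤ) 2).card := by
          refine Finset.card_le_card_of_injOn (fun k => k - k₀) ?_ ?_
          · intro k hk
            have hkS := (Finset.mem_filter.mp hk).1
            have hkb := (Finset.mem_filter.mp hk).2
            rw [Finset.mem_coe, Fintype.mem_piFinset]
            intro i
            rw [Finset.mem_Icc, ← abs_le]
            have hfl : ∀ i, ⌊kbar d A k i⌋ = ⌊kbar d A k₀ i⌋ := by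
              intro i
              have : fvec k i = fvec k₀ i := by rw [hkb, hk₀b]
              simpa [hfvec] using this
            have hv : ∀ i, |kbar d A (k - k₀) i| < 1 := by
              intro i
              rw [kbar_sub]
              have h1 := Int.floor_le (kbar d A k i)
              have h2 := Int.lt_floor_add_one (kbar d A k i)
              have h3 := Int.floor_le (kbar d A k₀ i)
              have h4 := Int.lt_floor_add_one (kbar d A k₀ i)
              rw [abs_sub_lt_iff]
              rw [hfl i] at h1 h2
              constructor <;> linarith
            have := small_sol hη hηd A hA (k - k₀) hv i
            simpa [Pi.sub_apply] using this
          · intro x _ y _ hxy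
            have h : x - k₀ = y - k₀ := hxy
            have := congrArg (· + k₀) h
            simpa using this
      _ = 5 ^ d := by
          rw [Fintype.card_piFinset]
          simp [Int.card_Icc]
  -- facts about members of T
  have hTfact : ∀ n ∈ T, (∀ i, 1 ≤ (n i).natAbs) ∧ (∏ i, (((n i).natAbs : ℕ) : ℝ)) ≤ Q := by
    intro n hn
    obtain ⟨k, hkS, rfl⟩ := Finset.mem_image.mp hn
    have hkS' := (Finset.mem_filter.mp hkS).2
    have hone : ∀ i, 1 ≤ |kbar d A k i| := hkS'.1
    have hub : ∏ i, |kbar d A k i| ≤ 2 ^ (s + 1) * (N : ℝ) := hkS'.2.2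
    have habs : ∀ i, 1 ≤ (fvec k i).natAbs ∧ (((fvec k i).natAbs : ℕ) : ℝ) ≤ 2 * |kbar d A k i| := by
      intro i
      set x := kbar d A k i with hx
      have h1 := Int.floor_le x
      have h2 := Int.lt_floor_add_one x
      rcases le_abs.mp (hone i) with hpos | hneg
      · -- 1 ≤ x
        have hfl1 : (1 : ℤ) ≤ ⌊x⌋ := by
          rw [Int.le_floor]; exact_mod_cast hpos
        have hfveq : fvec k i = ⌊x⌋ := rfl
        constructor
        · rw [hfveq]; omega
        · have hxabs : |x| = x := abs_of_pos (by linarith)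
          have : (((fvec k i).natAbs : ℕ) : ℝ) = ((⌊x⌋ : ℤ) : ℝ) := by
            simp only [hfvec, ← hx]
            rw [Nat.cast_natAbs, Int.cast_abs]
            exact abs_of_pos (by exact_mod_cast hfl1)
          rw [this, hxabs]
          linarith
      · -- 1 ≤ -x, i.e. x ≤ -1
        have hxneg : x ≤ -1 := by linarith
        have hfl1 : ⌊x⌋ ≤ -1 := by
          have : (⌊x⌋ : ℝ) ≤ -1 := le_trans h1 hxneg
          exact_mod_cast this
        have hfveq : fvec k i = ⌊x⌋ := rfl
        constructor
        · rw [hfveq]; omega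
        · have hxabs : |x| = -x := abs_of_neg (by linarith)
          have : (((fvec k i).natAbs : ℕ) : ℝ) = -((⌊x⌋ : ℤ) : ℝ) := by
            simp only [hfvec, ← hx]
            rw [Nat.cast_natAbs, Int.cast_abs]
            exact abs_of_neg (by exact_mod_cast (show ⌊x⌋ < 0 by omega))
          rw [this, hxabs]
          have : ((⌊x⌋ : ℤ) : ℝ) > x - 1 := by linarith
          linarith
    refine ⟨fun i => (habs i).1, ?_⟩
    calc ∏ i, (((fvec k i).natAbs : ℕ) : ℝ)
        ≤ ∏ i, 2 * |kbar d A k i| :=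
          Finset.prod_le_prod (fun i _ => by positivity) (fun i _ => (habs i).2)
      _ = 2 ^ d * ∏ i, |kbar d A k i| := by
          rw [Finset.prod_mul_distrib, Finset.prod_const, Finset.card_univ, Fintype.card_fin]
      _ ≤ 2 ^ d * (2 ^ (s + 1) * (N : ℝ)) := by
          refine mul_le_mul_of_nonneg_left hub (by positivity)
      _ = Q := by rw [hQ]; ring
  -- Step 2 : fibers of natvec on T have at most 2^d elements
  have step2 : T.card ≤ 2 ^ d * (T.image natvec).card := by
    refine Finset.card_le_mul_card_image T (2 ^ d) ?_
    intro m _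
    calc (T.filter fun n => natvec n = m).card
        ≤ (Fintype.piFinset fun _ : Fin d => ({-1, 1} : Finset ℤ)).card := by
          refine Finset.card_le_card_of_injOn (fun n i => Int.sign (n i)) ?_ ?_
          · intro n hn
            have hnT := (Finset.mem_filter.mp hn).1
            have hne : ∀ i, n i ≠ 0 := by
              intro i
              have := (hTfact n hnT).1 i
              omega
            rw [Finset.mem_coe, Fintype.mem_piFinset]
            intro i
            rcases lt_trichotomy (n i) 0 with h | h | h
            · simp [Int.sign_eq_neg_one_of_neg h]
            · exact absurd h (hne i)
            · simp [Int.sign_eq_one_of_pos h]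
          · intro n hn n' hn' hsg
            have hnm := (Finset.mem_filter.mp (Finset.mem_coe.mp hn)).2
            have hnm' := (Finset.mem_filter.mp (Finset.mem_coe.mp hn')).2
            funext i
            have h1 : Int.sign (n i) = Int.sign (n' i) := congrFun hsg i
            have h2 : (n i).natAbs = (n' i).natAbs := by
              have := hnm.trans hnm'.symm
              simpa [hnatvec] using congrFun this i
            rw [← Int.sign_mul_natAbs (n i), ← Int.sign_mul_natAbs (n' i), h1, h2]
      _ = 2 ^ d := by
          rw [Fintype.card_piFinset]
          simp
  -- Step 3 : the natAbs image lands in msetF d Q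
  have step3 : T.image natvec ⊆ msetF d Q := by
    intro m hm
    obtain ⟨n, hn, rfl⟩ := Finset.mem_image.mp hm
    obtain ⟨h1, h2⟩ := hTfact n hn
    have hprodnat : (∏ i, (n i).natAbs) ≤ ⌊Q⌋₊ := by
      refine Nat.le_floor ?_
      calc ((∏ i, (n i).natAbs : ℕ) : ℝ) = ∏ i, (((n i).natAbs : ℕ) : ℝ) := by push_cast; rfl
        _ ≤ Q := h2
    rw [msetF, Finset.mem_filter, Fintype.mem_piFinset]
    constructor
    · intro i
      rw [Finset.mem_Icc]
      refine ⟨h1 i, le_trans ?_ hprodnat⟩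
      exact Finset.single_le_prod' (fun j _ => h1 j) (Finset.mem_univ i)
    · exact h2
  -- put everything together
  have hd' : d - 1 + 1 = d := Nat.succ_pred_eq_of_pos hd
  have hmset : ((msetF d Q).card : ℝ) ≤ Q * (1 + Real.log Q) ^ (d - 1) := by
    have := msetF_card (d - 1) Q hQ1
    rwa [hd'] at this
  have hcount : (S.card : ℝ) ≤ 5 ^ d * 2 ^ d * ((msetF d Q).card : ℝ) := by
    have h3 : (T.image natvec).card ≤ (msetF d Q).card := Finset.card_le_card step3
    have : S.card ≤ 5 ^ d * (2 ^ d * (msetF d Q).card) :=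
      le_trans step1 (Nat.mul_le_mul_left _ (le_trans step2 (Nat.mul_le_mul_left _ h3)))
    calc (S.card : ℝ) ≤ ((5 ^ d * (2 ^ d * (msetF d Q).card) : ℕ) : ℝ) := by exact_mod_cast this
      _ = 5 ^ d * 2 ^ d * ((msetF d Q).card : ℝ) := by push_cast; ring
  -- numeric estimates on log Q
  have hle : 1 + Real.log Q ≤ ((d : ℝ) + 3) * (Real.log N + s) := by
    rw [hQ]; exact log_est d s N hN
  have hbase : (0 : ℝ) ≤ 1 + Real.log Q := by
    have := Real.log_nonneg hQ1; linarith
  have hpow : (1 + Real.log Q) ^ (d - 1)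
      ≤ ((d : ℝ) + 3) ^ (d - 1) * (Real.log N + s) ^ (d - 1) := by
    rw [← mul_pow]
    exact pow_le_pow_left₀ hbase hle (d - 1)
  have hQeq : Q = 2 ^ (d + 1) * 2 ^ s * (N : ℝ) := by rw [hQ]; ring
  calc (S.card : ℝ) ≤ 5 ^ d * 2 ^ d * ((msetF d Q).card : ℝ) := hcount
    _ ≤ 5 ^ d * 2 ^ d * (Q * (1 + Real.log Q) ^ (d - 1)) :=
        mul_le_mul_of_nonneg_left hmset (by positivity)
    _ = (5 ^ d * 2 ^ d * 2 ^ (d + 1) * 2 ^ s * (N : ℝ)) * (1 + Real.log Q) ^ (d - 1) := by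
        rw [hQeq]; ring
    _ ≤ (5 ^ d * 2 ^ d * 2 ^ (d + 1) * 2 ^ s * (N : ℝ)) *
        (((d : ℝ) + 3) ^ (d - 1) * (Real.log N + s) ^ (d - 1)) :=
        mul_le_mul_of_nonneg_left hpow (by positivity)
    _ = 5 ^ d * 2 ^ d * 2 ^ (d + 1) * ((d : ℝ) + 3) ^ (d - 1) * 2 ^ s * (N : ℝ) *
        (Real.log N + s) ^ (d - 1) := by ring
end
end
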